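/- arXiv:1711.04257 — 5 statements merged into one kernel-verified Lean document; each statement's English description precedes it below -/
import Mathlib

section
/- Let k ≥ 1 be a fixed integer. There exists a function f_k : ℕ₊ × ℕ₊ → ℤ such that: (i) f_k(m₁n₁, m₂n₂) = f_k(m₁,m₂)·f_k(n₁,n₂) whenever gcd(m₁m₂, n₁n₂) = 1; (ii) for every prime p and exponents ν₁, ν₂ ≥ 0, f_k(p^{ν₁}, p^{ν₂}) equals 1 if ν₁ = ν₂ = 0 or if ν₁, ν₂ ≥ 1 and ν₁+ν₂ = k, equals −1 if ν₁, ν₂ ≥ 1 and ν₁+ν₂ = k+1, and equals 0 otherwise; (iii) for all positive integers n₁, n₂, τ_{1,k}(n₁n₂) = Σ_{d₁ ∣ n₁, d₂ ∣ n₂} f_k(d₁,d₂) · τ_{1,k}(n₁/d₁) · τ_{1,k}(n₂/d₂). -/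
open scoped BigOperators

/-- `tau1k k n` = τ_{1,k}(n), the number of positive integers `b` with `b ^ k ∣ n`
(equivalently, the number of pairs `(a, b)` of positive integers with `a * b ^ k = n`). -/
def tau1k (k n : ℕ) : ℕ := (n.divisors.filter fun b => b ^ k ∣ n).card

open Finset
open scoped Classical

namespace BR

def T (k m : ℕ) : ℤ := (m / k : ℕ) + 1

def X (k m : ℕ) : ℤ := if k ∣ m then 1 else 0

def E (k d : ℕ) : ℤ :=
  (if d = 0 then 1 else 0) - (if d = 1 then 1 else 0)
    - (if d = k then 1 else 0) + (if d = k + 1 then 1 else 0)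

def g (k i j : ℕ) : ℤ :=
  if i = 0 ∧ j = 0 then 1
  else if 1 ≤ i ∧ 1 ≤ j ∧ i + j = k then 1
  else if 1 ≤ i ∧ 1 ≤ j ∧ i + j = k + 1 then -1
  else 0

lemma sumE (k m : ℕ) (x : ℕ → ℤ) :
    ∑ d ∈ range (m + 1), E k d * x d =
      x 0 - (if 1 ≤ m then x 1 else 0) - (if k ≤ m then x k else 0)
        + (if k + 1 ≤ m then x (k + 1) else 0) := by
  simp only [E, sub_mul, add_mul, ite_mul, one_mul, zero_mul]
  rw [Finset.sum_add_distrib, Finset.sum_sub_distrib, Finset.sum_sub_distrib]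
  simp only [Finset.sum_ite_eq', Finset.mem_range, Nat.lt_succ_iff]
  norm_num

lemma sumE' (k m : ℕ) (x : ℕ → ℤ) :
    ∑ j ∈ range (m + 1), E k (m - j) * x j =
      x m - (if 1 ≤ m then x (m - 1) else 0) - (if k ≤ m then x (m - k) else 0)
        + (if k + 1 ≤ m then x (m - k - 1) else 0) := by
  have h1 : ∑ j ∈ range (m + 1), E k (m - j) * x j
      = ∑ j ∈ range (m + 1), E k j * x (m - j) := by
    rw [← Finset.sum_range_reflect]
    apply Finset.sum_congr rfl
    intro j hj
    simp only [Finset.mem_range, Nat.lt_succ_iff] at hj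
    congr 2 <;> omega
  rw [h1, sumE]
  congr 1


lemma Tstep (k : ℕ) (m : ℕ) (hm : 1 ≤ m) : T k m = T k (m - 1) + X k m := by
  unfold T X
  obtain ⟨m', rfl⟩ : ∃ m', m = m' + 1 := ⟨m - 1, by omega⟩
  rw [Nat.succ_div]
  simp only [Nat.add_sub_cancel]
  push_cast
  split <;> push_cast <;> ring

lemma T_zero (k : ℕ) : T k 0 = 1 := by simp [T]

lemma Xshift (k m : ℕ) (h : k ≤ m) : X k m = X k (m - k) := by
  unfold X
  congr 1
  simp only [eq_iff_iff]
  constructor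
  · intro hd; exact (Nat.dvd_sub hd dvd_rfl)
  · intro hd; have := Nat.dvd_add hd (dvd_refl k); rwa [Nat.sub_add_cancel h] at this

lemma X_small (k m : ℕ) (h1 : 1 ≤ m) (h2 : m < k) : X k m = 0 := by
  unfold X
  rw [if_neg]
  intro hd
  have := Nat.le_of_dvd h1 hd
  omega

lemma X_self (k : ℕ) : X k k = 1 := by unfold X; rw [if_pos dvd_rfl]

lemma core (k : ℕ) (hk : 1 ≤ k) (m : ℕ) :
    T k m - (if 1 ≤ m then T k (m - 1) else 0) - (if k ≤ m then T k (m - k) else 0)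
      + (if k + 1 ≤ m then T k (m - k - 1) else 0) = if m = 0 then 1 else 0 := by
  rcases Nat.eq_zero_or_pos m with rfl | hm
  · rw [if_neg (by omega), if_neg (by omega), if_neg (by omega), if_pos rfl, T_zero]
    ring
  rw [if_pos (show 1 ≤ m by omega), if_neg (show ¬ m = 0 by omega)]
  rcases lt_or_ge m k with hmk | hmk
  · rw [if_neg (by omega), if_neg (by omega), Tstep k m hm, X_small k m hm hmk]
    ring
  rcases eq_or_lt_of_le hmk with heq | hmk'
  · subst heq
    rw [if_pos le_rfl, if_neg (by omega), Tstep k k (by omega), X_self,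
      Nat.sub_self, T_zero]
    ring
  · rw [if_pos hmk, if_pos (by omega)]
    have h2 : T k (m - k) = T k (m - k - 1) + X k (m - k) := Tstep k (m - k) (by omega)
    rw [Tstep k m hm, Xshift k m hmk, h2]
    ring


lemma X_one (k s : ℕ) (h : k ∣ s) : X k s = 1 := by unfold X; rw [if_pos h]

lemma X_eq (k s : ℕ) (hk : 1 ≤ k) (h1 : 1 ≤ s) (h2 : s < 2 * k) :
    X k s = if s = k then 1 else 0 := by
  unfold X
  by_cases hs : s = k
  · subst hs; simp
  · rw [if_neg hs, if_neg]
    rintro ⟨t, rfl⟩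
    have ht1 : 1 ≤ t := by
      rcases Nat.eq_zero_or_pos t with rfl | h
      · omega
      · exact h
    have ht2 : t < 2 := by
      by_contra hc
      push_neg at hc
      have : k * 2 ≤ k * t := Nat.mul_le_mul_left k hc
      omega
    have : t = 1 := by omega
    subst this
    omega

lemma conv1' (k : ℕ) (hk : 1 ≤ k) (m : ℕ) :
    ∑ j ∈ range (m + 1), E k (m - j) * T k j = if m = 0 then 1 else 0 := by
  rw [sumE']
  exact core k hk m

lemma conv1A (k : ℕ) (hk : 1 ≤ k) (m : ℕ) :
    ∑ u ∈ range (m + 1), E k u * T k (m - u) = if m = 0 then 1 else 0 := by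
  rw [sumE]
  simp only [Nat.sub_zero, ← Nat.sub_sub]
  exact core k hk m

lemma conv2 (k : ℕ) (hk : 1 ≤ k) (a b : ℕ) :
    ∑ i ∈ range (a + 1), ∑ j ∈ range (b + 1), E k (a - i) * E k (b - j) * T k (i + j)
      = g k a b := by
  have hfact : ∀ i, ∑ j ∈ range (b + 1), E k (a - i) * E k (b - j) * T k (i + j)
      = E k (a - i) * ∑ j ∈ range (b + 1), E k (b - j) * T k (i + j) := by
    intro i
    rw [Finset.mul_sum]
    exact Finset.sum_congr rfl fun j _ => by ring
  simp only [hfact]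
  have hinner : ∀ i, ∑ j ∈ range (b + 1), E k (b - j) * T k (i + j)
      = T k (i + b) - (if 1 ≤ b then T k (i + (b - 1)) else 0)
        - (if k ≤ b then T k (i + (b - k)) else 0)
        + (if k + 1 ≤ b then T k (i + (b - k - 1)) else 0) := by
    intro i
    exact sumE' k b (fun j => T k (i + j))
  simp only [hinner]
  rcases Nat.eq_zero_or_pos b with rfl | hb
  · -- b = 0
    have hsimp : ∀ i : ℕ, T k (i + 0) - (if 1 ≤ 0 then T k (i + (0 - 1)) else 0)
        - (if k ≤ 0 then T k (i + (0 - k)) else 0)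
        + (if k + 1 ≤ 0 then T k (i + (0 - k - 1)) else 0) = T k i := by
      intro i
      rw [if_neg (show ¬ (1:ℕ) ≤ 0 by omega), if_neg (show ¬ k ≤ 0 by omega),
        if_neg (show ¬ k + 1 ≤ 0 by omega), Nat.add_zero]
      ring
    simp only [hsimp]
    rw [conv1' k hk a]
    simp only [g, eq_self_iff_true, and_true, true_and]
    split_ifs <;> omega
  rcases lt_or_ge b k with hbk | hbk
  · -- 1 ≤ b < k
    have hsimp : ∀ i, T k (i + b) - (if 1 ≤ b then T k (i + (b - 1)) else 0)
        - (if k ≤ b then T k (i + (b - k)) else 0)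
        + (if k + 1 ≤ b then T k (i + (b - k - 1)) else 0) = X k (i + b) := by
      intro i
      rw [if_pos (show 1 ≤ b by omega), if_neg (show ¬ k ≤ b by omega),
        if_neg (show ¬ k + 1 ≤ b by omega)]
      have e1 : i + (b - 1) = (i + b) - 1 := by omega
      rw [e1, Tstep k (i + b) (by omega)]
      ring
    simp only [hsimp]
    rw [sumE' k a (fun i => X k (i + b))]
    rcases Nat.eq_zero_or_pos a with rfl | ha
    · rw [if_neg (show ¬ (1:ℕ) ≤ 0 by omega), if_neg (show ¬ k ≤ 0 by omega),
        if_neg (show ¬ k + 1 ≤ 0 by omega)]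
      rw [X_eq k (0 + b) hk (by omega) (by omega)]
      simp only [g, eq_self_iff_true, and_true, true_and]
      split_ifs <;> omega
    rcases lt_or_ge a k with hak | hak
    · -- 1 ≤ a < k
      rw [if_pos (show 1 ≤ a by omega), if_neg (show ¬ k ≤ a by omega),
        if_neg (show ¬ k + 1 ≤ a by omega)]
      rw [X_eq k (a + b) hk (by omega) (by omega),
        X_eq k (a - 1 + b) hk (by omega) (by omega)]
      simp only [g, eq_self_iff_true, and_true, true_and]
      split_ifs <;> omega
    rcases eq_or_lt_of_le hak with heq | hak'
    · -- a = k
      rw [if_pos (show 1 ≤ a by omega), if_pos (show k ≤ a by omega),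
        if_neg (show ¬ k + 1 ≤ a by omega)]
      rw [X_eq k (a + b) hk (by omega) (by omega),
        X_eq k (a - 1 + b) hk (by omega) (by omega),
        X_eq k (a - k + b) hk (by omega) (by omega)]
      simp only [g, eq_self_iff_true, and_true, true_and]
      split_ifs <;> omega
    · -- a ≥ k + 1
      rw [if_pos (show 1 ≤ a by omega), if_pos (show k ≤ a by omega),
        if_pos (show k + 1 ≤ a by omega)]
      have h1 : X k (a + b) = X k (a - k + b) := by
        rw [Xshift k (a + b) (by omega)]
        congr 1
        omega
      have h2 : X k (a - 1 + b) = X k (a - k - 1 + b) := by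
        rw [Xshift k (a - 1 + b) (by omega)]
        congr 1
        omega
      rw [h1, h2]
      simp only [g, eq_self_iff_true, and_true, true_and]
      split_ifs <;> omega
  rcases eq_or_lt_of_le hbk with heq | hbk'
  · -- b = k  (heq : k = b)
    have hsimp : ∀ i, T k (i + b) - (if 1 ≤ b then T k (i + (b - 1)) else 0)
        - (if k ≤ b then T k (i + (b - k)) else 0)
        + (if k + 1 ≤ b then T k (i + (b - k - 1)) else 0)
        = X k (i + b) - T k i := by
      intro i
      rw [if_pos (show 1 ≤ b by omega), if_pos (show k ≤ b by omega),
        if_neg (show ¬ k + 1 ≤ b by omega)]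
      have e1 : i + (b - 1) = (i + b) - 1 := by omega
      have e2 : i + (b - k) = i := by omega
      rw [e1, e2, Tstep k (i + b) (by omega)]
      ring
    simp only [hsimp, mul_sub]
    rw [Finset.sum_sub_distrib]
    rw [sumE' k a (fun i => X k (i + b)), conv1' k hk a]
    rcases Nat.eq_zero_or_pos a with rfl | ha
    · rw [if_neg (show ¬ (1:ℕ) ≤ 0 by omega), if_neg (show ¬ k ≤ 0 by omega),
        if_neg (show ¬ k + 1 ≤ 0 by omega), if_pos rfl]
      rw [X_one k (0 + b) (by exact ⟨1, by omega⟩)]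
      simp only [g, eq_self_iff_true, and_true, true_and]
      split_ifs <;> omega
    rw [if_neg (show ¬ a = 0 by omega)]
    rcases lt_or_ge a k with hak | hak
    · -- 1 ≤ a < k
      rw [if_pos (show 1 ≤ a by omega), if_neg (show ¬ k ≤ a by omega),
        if_neg (show ¬ k + 1 ≤ a by omega)]
      rw [X_eq k (a + b) hk (by omega) (by omega),
        X_eq k (a - 1 + b) hk (by omega) (by omega)]
      simp only [g, eq_self_iff_true, and_true, true_and]
      split_ifs <;> omega
    rcases eq_or_lt_of_le hak with heq2 | hak'
    · -- a = k
      rw [if_pos (show 1 ≤ a by omega), if_pos (show k ≤ a by omega),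
        if_neg (show ¬ k + 1 ≤ a by omega)]
      rw [X_one k (a + b) (by exact ⟨2, by omega⟩)]
      rw [X_eq k (a - 1 + b) hk (by omega) (by omega)]
      rw [X_one k (a - k + b) (by exact ⟨1, by omega⟩)]
      simp only [g, eq_self_iff_true, and_true, true_and]
      split_ifs <;> omega
    · -- a ≥ k + 1
      rw [if_pos (show 1 ≤ a by omega), if_pos (show k ≤ a by omega),
        if_pos (show k + 1 ≤ a by omega)]
      have h1 : X k (a + b) = X k (a - k + b) := by
        rw [Xshift k (a + b) (by omega)]
        congr 1
        omega
      have h2 : X k (a - 1 + b) = X k (a - k - 1 + b) := by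
        rw [Xshift k (a - 1 + b) (by omega)]
        congr 1
        omega
      rw [h1, h2]
      simp only [g, eq_self_iff_true, and_true, true_and]
      split_ifs <;> omega
  · -- b ≥ k + 1
    have hsimp : ∀ i, T k (i + b) - (if 1 ≤ b then T k (i + (b - 1)) else 0)
        - (if k ≤ b then T k (i + (b - k)) else 0)
        + (if k + 1 ≤ b then T k (i + (b - k - 1)) else 0) = 0 := by
      intro i
      rw [if_pos (show 1 ≤ b by omega), if_pos (show k ≤ b by omega),
        if_pos (show k + 1 ≤ b by omega)]
      have e1 : i + (b - 1) = (i + b) - 1 := by omega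
      have e3 : i + (b - k - 1) = (i + (b - k)) - 1 := by omega
      rw [e1, e3, Tstep k (i + b) (by omega), Tstep k (i + (b - k)) (by omega)]
      have h4 : X k (i + b) = X k (i + (b - k)) := by
        rw [Xshift k (i + b) (by omega)]
        congr 1
        omega
      rw [h4]
      ring
    simp only [hsimp, mul_zero, Finset.sum_const_zero]
    simp only [g, eq_self_iff_true, and_true, true_and]
    split_ifs <;> omega


lemma S1 (k : ℕ) (hk : 1 ≤ k) (a i' : ℕ) (h : i' ≤ a) :
    ∑ i ∈ range (a + 1), (if i' ≤ i then E k (i - i') * T k (a - i) else 0)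
      = if i' = a then 1 else 0 := by
  rw [← Finset.sum_filter]
  have hfilter : (range (a + 1)).filter (fun i => i' ≤ i) = Ico i' (a + 1) := by
    ext x
    simp [Nat.lt_succ_iff]
    omega
  rw [hfilter, Finset.sum_Ico_eq_sum_range]
  have hcongr : ∀ u ∈ range (a + 1 - i'), E k (i' + u - i') * T k (a - (i' + u))
      = E k u * T k ((a - i') - u) := by
    intro u hu
    congr 2 <;> omega
  rw [Finset.sum_congr rfl hcongr]
  have hr : a + 1 - i' = (a - i') + 1 := by omega
  rw [hr, conv1A k hk (a - i')]
  congr 1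
  simp only [eq_iff_iff]
  omega

lemma local_main (k : ℕ) (hk : 1 ≤ k) (a b : ℕ) :
    ∑ i ∈ range (a + 1), ∑ j ∈ range (b + 1), g k i j * T k (a - i) * T k (b - j)
      = T k (a + b) := by
  have claim1 : ∀ i ∈ range (a + 1), ∀ j ∈ range (b + 1),
      g k i j * T k (a - i) * T k (b - j)
      = ∑ i' ∈ range (a + 1), ∑ j' ∈ range (b + 1),
          (if i' ≤ i then E k (i - i') * T k (a - i) else 0) *
            ((if j' ≤ j then E k (j - j') * T k (b - j) else 0) * T k (i' + j')) := by
    intro i hi j hj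
    simp only [Finset.mem_range, Nat.lt_succ_iff] at hi hj
    rw [← conv2 k hk i j]
    -- collapse the i' sum from range (a+1) to range (i+1)
    rw [Finset.sum_mul, Finset.sum_mul]
    rw [← Finset.sum_subset (Finset.range_subset_range.2 (by omega : i + 1 ≤ a + 1))
        (by
          intro x hx hxn
          simp only [Finset.mem_range, Nat.lt_succ_iff] at hx hxn
          rw [if_neg (by omega)]
          simp only [zero_mul, Finset.sum_const_zero])]
    apply Finset.sum_congr rfl
    intro i' hi'
    simp only [Finset.mem_range, Nat.lt_succ_iff] at hi'
    rw [if_pos hi']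
    rw [Finset.sum_mul]
    rw [← Finset.sum_subset (Finset.range_subset_range.2 (by omega : j + 1 ≤ b + 1))
        (by
          intro x hx hxn
          simp only [Finset.mem_range, Nat.lt_succ_iff] at hx hxn
          rw [if_neg (by omega)]
          ring)]
    rw [Finset.sum_mul]
    apply Finset.sum_congr rfl
    intro j' hj'
    simp only [Finset.mem_range, Nat.lt_succ_iff] at hj'
    rw [if_pos hj']
    ring
  rw [Finset.sum_congr rfl (fun i hi => Finset.sum_congr rfl (fun j hj => claim1 i hi j hj))]
  -- now swap sums
  rw [Finset.sum_comm]
  have swap2 : ∀ j ∈ range (b+1), ∑ i ∈ range (a + 1), ∑ i' ∈ range (a + 1),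
        ∑ j' ∈ range (b + 1),
          (if i' ≤ i then E k (i - i') * T k (a - i) else 0) *
            ((if j' ≤ j then E k (j - j') * T k (b - j) else 0) * T k (i' + j'))
      = ∑ i' ∈ range (a + 1), ∑ j' ∈ range (b + 1), ∑ i ∈ range (a + 1),
          (if i' ≤ i then E k (i - i') * T k (a - i) else 0) *
            ((if j' ≤ j then E k (j - j') * T k (b - j) else 0) * T k (i' + j')) := by
    intro j _
    rw [Finset.sum_comm]
    exact Finset.sum_congr rfl fun i' _ => Finset.sum_comm
  rw [Finset.sum_congr rfl swap2]
  rw [Finset.sum_comm]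
  have eval : ∀ i' ∈ range (a + 1), ∑ j ∈ range (b + 1), ∑ j' ∈ range (b + 1),
        ∑ i ∈ range (a + 1),
          (if i' ≤ i then E k (i - i') * T k (a - i) else 0) *
            ((if j' ≤ j then E k (j - j') * T k (b - j) else 0) * T k (i' + j'))
      = if i' = a then T k (i' + b) else 0 := by
    intro i' hi'
    simp only [Finset.mem_range, Nat.lt_succ_iff] at hi'
    rw [Finset.sum_comm]
    have inner : ∀ j' ∈ range (b + 1), ∑ j ∈ range (b + 1), ∑ i ∈ range (a + 1),
          (if i' ≤ i then E k (i - i') * T k (a - i) else 0) *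
            ((if j' ≤ j then E k (j - j') * T k (b - j) else 0) * T k (i' + j'))
        = (if i' = a then 1 else 0) *
            ((∑ j ∈ range (b + 1), (if j' ≤ j then E k (j - j') * T k (b - j) else 0))
              * T k (i' + j')) := by
      intro j' hj'
      rw [Finset.sum_comm]
      rw [← S1 k hk a i' hi']
      rw [Finset.sum_mul]
      apply Finset.sum_congr rfl
      intro i _
      rw [Finset.sum_mul, Finset.mul_sum]
    rw [Finset.sum_congr rfl inner]
    have hS : ∀ j' ∈ range (b + 1),
        (if i' = a then (1:ℤ) else 0) *
          ((∑ j ∈ range (b + 1), (if j' ≤ j then E k (j - j') * T k (b - j) else 0))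
            * T k (i' + j'))
        = (if i' = a then (1:ℤ) else 0) * ((if j' = b then 1 else 0) * T k (i' + j')) := by
      intro j' hj'
      simp only [Finset.mem_range, Nat.lt_succ_iff] at hj'
      rw [S1 k hk b j' hj']
    rw [Finset.sum_congr rfl hS]
    by_cases hia : i' = a
    · rw [if_pos hia]
      simp only [if_pos hia, one_mul, ite_mul, zero_mul]
      simp only [Finset.sum_ite_eq', Finset.mem_range, Nat.lt_succ_iff, le_refl, if_true]
    · rw [if_neg hia]
      simp only [if_neg hia, zero_mul, Finset.sum_const_zero]
  rw [Finset.sum_congr rfl eval]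
  simp only [Finset.sum_ite_eq', Finset.mem_range, Nat.lt_succ_iff]
  rw [if_pos le_rfl]


/-- indicator of (positive) k-th powers, as an arithmetic function -/
noncomputable def chi (k : ℕ) : ArithmeticFunction ℕ :=
  ⟨fun n => if n ≠ 0 ∧ ∃ b, b ^ k = n then 1 else 0, by simp⟩

lemma chi_apply (k n : ℕ) :
    chi k n = if n ≠ 0 ∧ ∃ b, b ^ k = n then 1 else 0 := rfl

lemma exists_pow_mul (k m n : ℕ) (cop : Nat.Coprime m n) :
    (∃ c, c ^ k = m * n) ↔ (∃ d, d ^ k = m) ∧ (∃ e, e ^ k = n) := by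
  constructor
  · rintro ⟨c, hc⟩
    have hu : IsUnit (gcd m n) := by
      rw [Nat.isUnit_iff]
      exact cop
    have hm' : ∃ d, m = d ^ k := exists_eq_pow_of_mul_eq_pow hu hc.symm
    have hu' : IsUnit (gcd n m) := by
      rw [Nat.isUnit_iff]
      exact cop.symm
    have hn' : ∃ e, n = e ^ k := exists_eq_pow_of_mul_eq_pow hu' (by rw [mul_comm]; exact hc.symm)
    exact ⟨⟨hm'.choose, hm'.choose_spec.symm⟩, ⟨hn'.choose, hn'.choose_spec.symm⟩⟩
  · rintro ⟨⟨d, rfl⟩, ⟨e, rfl⟩⟩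
    exact ⟨d * e, by rw [mul_pow]⟩

lemma chi_mult (k : ℕ) : (chi k).IsMultiplicative := by
  constructor
  · rw [chi_apply, if_pos ⟨one_ne_zero, 1, one_pow k⟩]
  · intro m n cop
    rcases Nat.eq_zero_or_pos m with rfl | hm
    · have hn1 : n = 1 := (Nat.coprime_zero_left n).mp cop
      subst hn1
      simp [chi_apply]
    rcases Nat.eq_zero_or_pos n with rfl | hn
    · have hm1 : m = 1 := (Nat.coprime_zero_left m).mp cop.symm
      subst hm1
      simp [chi_apply]
    rw [chi_apply, chi_apply, chi_apply]
    simp only [exists_pow_mul k m n cop]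
    have h1 : m * n ≠ 0 := by positivity
    have hm' : m ≠ 0 := by omega
    have hn' : n ≠ 0 := by omega
    simp only [h1, hm', hn', ne_eq, not_false_eq_true, true_and]
    split_ifs with h2 h3 h4 h5 h6 h7 <;> first | rfl | tauto


lemma tau1k_eq (k n : ℕ) (hk : 1 ≤ k) (hn : n ≠ 0) :
    tau1k k n = ∑ d ∈ n.divisors, chi k d := by
  have hcard : tau1k k n = (n.divisors.filter fun d => ∃ b, b ^ k = d).card := by
    unfold tau1k
    apply Finset.card_nbij (fun b => b ^ k)
    · intro b hb
      simp only [Finset.mem_coe, Finset.mem_filter, Nat.mem_divisors] at hb ⊢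
      exact ⟨⟨hb.2, hb.1.2⟩, ⟨b, rfl⟩⟩
    · intro b1 h1 b2 h2 heq
      exact Nat.pow_left_injective (by omega) heq
    · intro d hd
      simp only [Finset.coe_filter, Set.mem_setOf_eq, Nat.mem_divisors] at hd
      obtain ⟨⟨hdvd, hn0⟩, b, rfl⟩ := hd
      refine Set.mem_image_of_mem _ ?_
      simp only [Finset.coe_filter, Set.mem_setOf_eq, Nat.mem_divisors]
      exact ⟨⟨dvd_trans (dvd_pow_self b (by omega)) hdvd, hn0⟩, hdvd⟩
  rw [hcard, Finset.card_filter]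
  apply Finset.sum_congr rfl
  intro d hd
  rw [chi_apply]
  have : d ≠ 0 := Nat.pos_of_mem_divisors hd |>.ne'
  congr 1
  simp [this]

lemma tau1k_arith (k n : ℕ) (hk : 1 ≤ k) (hn : n ≠ 0) :
    tau1k k n = (ArithmeticFunction.zeta * chi k) n := by
  rw [ArithmeticFunction.zeta_mul_apply, tau1k_eq k n hk hn]

lemma tau1k_mul (k m n : ℕ) (hk : 1 ≤ k) (hm : m ≠ 0) (hn : n ≠ 0)
    (cop : Nat.Coprime m n) : tau1k k (m * n) = tau1k k m * tau1k k n := by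
  rw [tau1k_arith k _ hk (by positivity), tau1k_arith k m hk hm, tau1k_arith k n hk hn]
  exact (ArithmeticFunction.isMultiplicative_zeta.mul (chi_mult k)).map_mul_of_coprime cop

lemma pow_eq_ppow (k i p : ℕ) (hk : 1 ≤ k) (pp : p.Prime) :
    (∃ b, b ^ k = p ^ i) ↔ k ∣ i := by
  constructor
  · rintro ⟨b, hb⟩
    have hbdvd : b ∣ p ^ i := hb ▸ dvd_pow_self b (by omega)
    obtain ⟨j, hj, rfl⟩ := (Nat.dvd_prime_pow pp).mp hbdvd
    rw [← pow_mul] at hb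
    have := Nat.pow_right_injective pp.two_le hb
    exact ⟨j, by rw [← this, mul_comm]⟩
  · rintro ⟨t, rfl⟩
    exact ⟨p ^ t, by rw [← pow_mul, mul_comm]⟩

lemma tau1k_pp (k p m : ℕ) (hk : 1 ≤ k) (pp : p.Prime) :
    tau1k k (p ^ m) = m / k + 1 := by
  rw [tau1k_eq k _ hk (pow_ne_zero m pp.pos.ne'), Nat.divisors_prime_pow pp, Finset.sum_map]
  have hterm : ∀ i ∈ range (m + 1), chi k ((⟨(p ^ ·), fun a b h => by
        exact Nat.pow_right_injective pp.two_le h⟩ : ℕ ↪ ℕ) i)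
      = if k ∣ i then 1 else 0 := by
    intro i hi
    show chi k (p ^ i) = _
    simp only [Function.Embedding.coeFn_mk, chi_apply]
    simp only [pow_eq_ppow k i p hk pp]
    have : p ^ i ≠ 0 := pow_ne_zero i pp.pos.ne'
    simp [this, pp.ne_zero]
  rw [Finset.sum_congr rfl hterm]
  rw [← Finset.card_filter]
  have hset : (range (m + 1)).filter (fun i => k ∣ i)
      = insert 0 ((Finset.Ioc 0 m).filter (fun i => k ∣ i)) := by
    ext x
    simp only [Finset.mem_filter, Finset.mem_range, Finset.mem_insert, Finset.mem_Ioc,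
      Nat.lt_succ_iff]
    constructor
    · rintro ⟨hx, hd⟩
      rcases Nat.eq_zero_or_pos x with rfl | hp
      · exact Or.inl rfl
      · exact Or.inr ⟨⟨hp, hx⟩, hd⟩
    · rintro (rfl | ⟨⟨h1, h2⟩, hd⟩)
      · exact ⟨by omega, dvd_zero k⟩
      · exact ⟨by omega, hd⟩
  rw [hset, Finset.card_insert_of_notMem (by simp), Nat.Ioc_filter_dvd_card_eq_div]


lemma tau1k_one (k : ℕ) (hk : 1 ≤ k) : tau1k k 1 = 1 := by
  have := tau1k_pp k 2 0 hk Nat.prime_two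
  simpa using this


def F (k m₁ m₂ : ℕ) : ℤ :=
  ∏ p ∈ (m₁ * m₂).primeFactors, g k (m₁.factorization p) (m₂.factorization p)

lemma g_zero (k : ℕ) : g k 0 0 = 1 := by simp [g]

lemma F_one (k : ℕ) : F k 1 1 = 1 := by simp [F]

lemma F_pp (k p ν₁ ν₂ : ℕ) (pp : p.Prime) : F k (p ^ ν₁) (p ^ ν₂) = g k ν₁ ν₂ := by
  rcases Nat.eq_zero_or_pos (ν₁ + ν₂) with h0 | hpos
  · have h1 : ν₁ = 0 := by omega
    have h2 : ν₂ = 0 := by omega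
    subst h1; subst h2
    simpa [F] using (g_zero k).symm
  · unfold F
    rw [← pow_add]
    rw [Nat.primeFactors_pow p (by omega), Nat.Prime.primeFactors pp]
    rw [Finset.prod_singleton]
    congr 1 <;> simp [pp.factorization_pow]

lemma F_mul (k m₁ m₂ n₁ n₂ : ℕ) (hm₁ : m₁ ≠ 0) (hm₂ : m₂ ≠ 0) (hn₁ : n₁ ≠ 0) (hn₂ : n₂ ≠ 0)
    (cop : Nat.Coprime (m₁ * m₂) (n₁ * n₂)) :
    F k (m₁ * n₁) (m₂ * n₂) = F k m₁ m₂ * F k n₁ n₂ := by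
  unfold F
  have hre : (m₁ * n₁) * (m₂ * n₂) = (m₁ * m₂) * (n₁ * n₂) := by ring
  rw [hre, Nat.primeFactors_mul (by positivity) (by positivity)]
  have hdisj : Disjoint (m₁ * m₂).primeFactors (n₁ * n₂).primeFactors :=
    Nat.Coprime.disjoint_primeFactors cop
  rw [Finset.prod_union hdisj]
  congr 1
  · apply Finset.prod_congr rfl
    intro p hp
    have hpp : p.Prime := Nat.prime_of_mem_primeFactors hp
    have hpn : ¬ p ∣ n₁ * n₂ := by
      intro hd
      have h1 : p ∣ (m₁ * m₂).gcd (n₁ * n₂) :=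
        Nat.dvd_gcd (Nat.dvd_of_mem_primeFactors hp) hd
      rw [cop] at h1
      exact Nat.Prime.one_lt hpp |>.ne' (Nat.eq_one_of_dvd_one h1 |>.symm ▸ rfl)
    have e1 : (m₁ * n₁).factorization p = m₁.factorization p := by
      rw [Nat.factorization_mul hm₁ hn₁]
      simp only [Finsupp.coe_add, Pi.add_apply]
      have : n₁.factorization p = 0 := by
        apply Nat.factorization_eq_zero_of_not_dvd
        intro hd
        exact hpn (hd.mul_right n₂)
      omega
    have e2 : (m₂ * n₂).factorization p = m₂.factorization p := by
      rw [Nat.factorization_mul hm₂ hn₂]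
      simp only [Finsupp.coe_add, Pi.add_apply]
      have : n₂.factorization p = 0 := by
        apply Nat.factorization_eq_zero_of_not_dvd
        intro hd
        exact hpn (hd.mul_left n₁)
      omega
    rw [e1, e2]
  · apply Finset.prod_congr rfl
    intro p hp
    have hpp : p.Prime := Nat.prime_of_mem_primeFactors hp
    have hpm : ¬ p ∣ m₁ * m₂ := by
      intro hd
      have h1 : p ∣ (m₁ * m₂).gcd (n₁ * n₂) :=
        Nat.dvd_gcd hd (Nat.dvd_of_mem_primeFactors hp)
      rw [cop] at h1
      exact Nat.Prime.one_lt hpp |>.ne' (Nat.eq_one_of_dvd_one h1 |>.symm ▸ rfl)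
    have e1 : (m₁ * n₁).factorization p = n₁.factorization p := by
      rw [Nat.factorization_mul hm₁ hn₁]
      simp only [Finsupp.coe_add, Pi.add_apply]
      have : m₁.factorization p = 0 := by
        apply Nat.factorization_eq_zero_of_not_dvd
        intro hd
        exact hpm (hd.mul_right m₂)
      omega
    have e2 : (m₂ * n₂).factorization p = n₂.factorization p := by
      rw [Nat.factorization_mul hm₂ hn₂]
      simp only [Finsupp.coe_add, Pi.add_apply]
      have : m₂.factorization p = 0 := by
        apply Nat.factorization_eq_zero_of_not_dvd
        intro hd
        exact hpm (hd.mul_left m₁)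
      omega
    rw [e1, e2]

lemma sum_div_split (u v : ℕ) (hu : u ≠ 0) (hv : v ≠ 0) (cop : Nat.Coprime u v) (φ : ℕ → ℤ) :
    ∑ d ∈ (u * v).divisors, φ d = ∑ e ∈ u.divisors, ∑ c ∈ v.divisors, φ (e * c) := by
  rw [← Finset.sum_product']
  symm
  apply Finset.sum_nbij' (i := fun p => p.1 * p.2) (j := fun d => (d.gcd u, d.gcd v))
  · rintro ⟨e, c⟩ h
    simp only [Finset.mem_product, Nat.mem_divisors] at h ⊢
    exact ⟨mul_dvd_mul h.1.1 h.2.1, by positivity⟩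
  · intro d hd
    simp only [Nat.mem_divisors, Finset.mem_product] at hd ⊢
    exact ⟨⟨Nat.gcd_dvd_right d u, hu⟩, ⟨Nat.gcd_dvd_right d v, hv⟩⟩
  · rintro ⟨e, c⟩ h
    simp only [Finset.mem_product, Nat.mem_divisors] at h
    obtain ⟨⟨he, _⟩, ⟨hc, _⟩⟩ := h
    have hce : Nat.Coprime c u := Nat.Coprime.coprime_dvd_left hc cop.symm
    have hec : Nat.Coprime e v := Nat.Coprime.coprime_dvd_left he cop
    have g1 : (e * c).gcd u = e := by
      rw [Nat.Coprime.gcd_mul_right_cancel e hce]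
      exact Nat.gcd_eq_left he
    have g2 : (e * c).gcd v = c := by
      rw [mul_comm, Nat.Coprime.gcd_mul_right_cancel c hec]
      exact Nat.gcd_eq_left hc
    simp [g1, g2]
  · intro d hd
    simp only [Nat.mem_divisors] at hd
    have : d.gcd u * d.gcd v = d.gcd (u * v) := (Nat.Coprime.gcd_mul d cop).symm
    simp only [this]
    exact Nat.gcd_eq_left hd.1
  · rintro ⟨e, c⟩ _
    rfl


lemma key (k : ℕ) (hk : 1 ≤ k) : ∀ N n₁ n₂ : ℕ, n₁ * n₂ = N → n₁ ≠ 0 → n₂ ≠ 0 →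
    (tau1k k (n₁ * n₂) : ℤ) =
      ∑ d₁ ∈ n₁.divisors, ∑ d₂ ∈ n₂.divisors,
        F k d₁ d₂ * (tau1k k (n₁ / d₁) : ℤ) * (tau1k k (n₂ / d₂) : ℤ) := by
  intro N
  induction N using Nat.strong_induction_on with
  | _ N ih =>
  intro n₁ n₂ hN h1 h2
  by_cases htriv : n₁ = 1 ∧ n₂ = 1
  · obtain ⟨rfl, rfl⟩ := htriv
    rw [Nat.divisors_one]
    simp [tau1k_one k hk, F_one k]
  · -- pick a prime divisor
    have hne1 : n₁ * n₂ ≠ 1 := by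
      rcases Nat.eq_zero_or_pos n₁ with h | h
      · omega
      rcases Nat.eq_zero_or_pos n₂ with h' | h'
      · omega
      intro hcontra
      exact htriv ⟨by nlinarith [Nat.eq_one_of_mul_eq_one_right hcontra,
        Nat.eq_one_of_mul_eq_one_left hcontra],
        Nat.eq_one_of_mul_eq_one_left hcontra⟩
    obtain ⟨p, pp, pdvd⟩ := Nat.exists_prime_and_dvd hne1
    obtain ⟨a, m₁, hn₁, hpm₁, hm₁⟩ : ∃ a m₁, p ^ a * m₁ = n₁ ∧ ¬p ∣ m₁ ∧ m₁ ≠ 0 :=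
      ⟨n₁.factorization p, ordCompl[p] n₁, Nat.ordProj_mul_ordCompl_eq_self n₁ p,
        Nat.not_dvd_ordCompl pp h1, (Nat.ordCompl_pos p h1).ne'⟩
    obtain ⟨b, m₂, hn₂, hpm₂, hm₂⟩ : ∃ b m₂, p ^ b * m₂ = n₂ ∧ ¬p ∣ m₂ ∧ m₂ ≠ 0 :=
      ⟨n₂.factorization p, ordCompl[p] n₂, Nat.ordProj_mul_ordCompl_eq_self n₂ p,
        Nat.not_dvd_ordCompl pp h2, (Nat.ordCompl_pos p h2).ne'⟩
    subst hn₁; subst hn₂; subst hN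
    have hp1 : 1 < p := pp.one_lt
    have hpm : ¬ p ∣ m₁ * m₂ := fun hd => ((Nat.Prime.dvd_mul pp).mp hd).elim hpm₁ hpm₂
    have hab : 1 ≤ a + b := by
      by_contra hc
      push_neg at hc
      have ha0 : a = 0 := by omega
      have hb0 : b = 0 := by omega
      subst ha0; subst hb0
      simp only [pow_zero, one_mul] at pdvd
      exact hpm pdvd
    have cop_pm : Nat.Coprime (p ^ (a + b)) (m₁ * m₂) :=
      Nat.Coprime.pow_left _ ((Nat.Prime.coprime_iff_not_dvd pp).mpr hpm)
    have copa : Nat.Coprime (p ^ a) m₁ :=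
      Nat.Coprime.pow_left _ ((Nat.Prime.coprime_iff_not_dvd pp).mpr hpm₁)
    have copb : Nat.Coprime (p ^ b) m₂ :=
      Nat.Coprime.pow_left _ ((Nat.Prime.coprime_iff_not_dvd pp).mpr hpm₂)
    have hppos : ∀ e : ℕ, (p : ℕ) ^ e ≠ 0 := fun e => pow_ne_zero e (by omega)
    -- LHS
    have hLHS : (tau1k k (p ^ a * m₁ * (p ^ b * m₂)) : ℤ)
        = T k (a + b) * (tau1k k (m₁ * m₂) : ℤ) := by
      have hre : p ^ a * m₁ * (p ^ b * m₂) = p ^ (a + b) * (m₁ * m₂) := by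
        rw [pow_add]; ring
      rw [hre, tau1k_mul k _ _ hk (hppos _) (by positivity) cop_pm,
        tau1k_pp k p (a + b) hk pp]
      push_cast [T]
      ring
    rw [hLHS]
    -- RHS: split the divisor sums
    rw [sum_div_split (p ^ a) m₁ (hppos a) hm₁ copa]
    have hinner : ∀ e₁ ∈ (p ^ a).divisors, ∀ c₁ ∈ m₁.divisors,
        (∑ d₂ ∈ (p ^ b * m₂).divisors,
          F k (e₁ * c₁) d₂ * (tau1k k (p ^ a * m₁ / (e₁ * c₁)) : ℤ)
            * (tau1k k (p ^ b * m₂ / d₂) : ℤ))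
        = ∑ e₂ ∈ (p ^ b).divisors, ∑ c₂ ∈ m₂.divisors,
            F k (e₁ * c₁) (e₂ * c₂) * (tau1k k (p ^ a * m₁ / (e₁ * c₁)) : ℤ)
              * (tau1k k (p ^ b * m₂ / (e₂ * c₂)) : ℤ) := by
      intro e₁ _ c₁ _
      rw [sum_div_split (p ^ b) m₂ (hppos b) hm₂ copb]
    rw [Finset.sum_congr rfl (fun e₁ he₁ => Finset.sum_congr rfl
      (fun c₁ hc₁ => hinner e₁ he₁ c₁ hc₁))]
    -- rewrite each term as a product
    have hterm : ∀ e₁ ∈ (p ^ a).divisors, ∀ c₁ ∈ m₁.divisors,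
        ∀ e₂ ∈ (p ^ b).divisors, ∀ c₂ ∈ m₂.divisors,
        F k (e₁ * c₁) (e₂ * c₂) * (tau1k k (p ^ a * m₁ / (e₁ * c₁)) : ℤ)
          * (tau1k k (p ^ b * m₂ / (e₂ * c₂)) : ℤ)
        = (F k e₁ e₂ * (tau1k k (p ^ a / e₁) : ℤ) * (tau1k k (p ^ b / e₂) : ℤ))
          * (F k c₁ c₂ * (tau1k k (m₁ / c₁) : ℤ) * (tau1k k (m₂ / c₂) : ℤ)) := by
      intro e₁ he₁ c₁ hc₁ e₂ he₂ c₂ hc₂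
      have he₁0 : e₁ ≠ 0 := (Nat.pos_of_mem_divisors he₁).ne'
      have hc₁0 : c₁ ≠ 0 := (Nat.pos_of_mem_divisors hc₁).ne'
      have he₂0 : e₂ ≠ 0 := (Nat.pos_of_mem_divisors he₂).ne'
      have hc₂0 : c₂ ≠ 0 := (Nat.pos_of_mem_divisors hc₂).ne'
      rw [Nat.mem_divisors] at he₁ hc₁ he₂ hc₂
      have hde₁ := he₁.1
      have hdc₁ := hc₁.1
      have hde₂ := he₂.1
      have hdc₂ := hc₂.1
      have copec : Nat.Coprime (e₁ * e₂) (c₁ * c₂) := by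
        apply Nat.Coprime.coprime_dvd_left (mul_dvd_mul hde₁ hde₂)
        apply Nat.Coprime.coprime_dvd_right (mul_dvd_mul hdc₁ hdc₂)
        rw [← pow_add]
        exact cop_pm
      rw [F_mul k e₁ e₂ c₁ c₂ he₁0 he₂0 hc₁0 hc₂0 copec]
      have hd1 : p ^ a * m₁ / (e₁ * c₁) = (p ^ a / e₁) * (m₁ / c₁) :=
        (Nat.div_mul_div_comm hde₁ hdc₁).symm
      have hd2 : p ^ b * m₂ / (e₂ * c₂) = (p ^ b / e₂) * (m₂ / c₂) :=
        (Nat.div_mul_div_comm hde₂ hdc₂).symm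
      have hq1 : p ^ a / e₁ ≠ 0 :=
        (Nat.div_pos (Nat.le_of_dvd (by positivity) hde₁) (by omega)).ne'
      have hq2 : m₁ / c₁ ≠ 0 :=
        (Nat.div_pos (Nat.le_of_dvd (by omega) hdc₁) (by omega)).ne'
      have hq3 : p ^ b / e₂ ≠ 0 :=
        (Nat.div_pos (Nat.le_of_dvd (by positivity) hde₂) (by omega)).ne'
      have hq4 : m₂ / c₂ ≠ 0 :=
        (Nat.div_pos (Nat.le_of_dvd (by omega) hdc₂) (by omega)).ne'
      have cop1 : Nat.Coprime (p ^ a / e₁) (m₁ / c₁) := by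
        apply Nat.Coprime.coprime_dvd_left (Nat.div_dvd_of_dvd hde₁)
        exact Nat.Coprime.coprime_dvd_right (Nat.div_dvd_of_dvd hdc₁) copa
      have cop2 : Nat.Coprime (p ^ b / e₂) (m₂ / c₂) := by
        apply Nat.Coprime.coprime_dvd_left (Nat.div_dvd_of_dvd hde₂)
        exact Nat.Coprime.coprime_dvd_right (Nat.div_dvd_of_dvd hdc₂) copb
      rw [hd1, hd2, tau1k_mul k _ _ hk hq1 hq2 cop1, tau1k_mul k _ _ hk hq3 hq4 cop2]
      push_cast
      ring
    rw [Finset.sum_congr rfl (fun e₁ he₁ => Finset.sum_congr rfl (fun c₁ hc₁ =>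
      Finset.sum_congr rfl (fun e₂ he₂ => Finset.sum_congr rfl (fun c₂ hc₂ =>
        hterm e₁ he₁ c₁ hc₁ e₂ he₂ c₂ hc₂))))]
    -- factor the four-fold sum into a product of two double sums
    have hfactor : ∑ e₁ ∈ (p ^ a).divisors, ∑ c₁ ∈ m₁.divisors,
        ∑ e₂ ∈ (p ^ b).divisors, ∑ c₂ ∈ m₂.divisors,
          (F k e₁ e₂ * (tau1k k (p ^ a / e₁) : ℤ) * (tau1k k (p ^ b / e₂) : ℤ))
            * (F k c₁ c₂ * (tau1k k (m₁ / c₁) : ℤ) * (tau1k k (m₂ / c₂) : ℤ))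
        = (∑ e₁ ∈ (p ^ a).divisors, ∑ e₂ ∈ (p ^ b).divisors,
            F k e₁ e₂ * (tau1k k (p ^ a / e₁) : ℤ) * (tau1k k (p ^ b / e₂) : ℤ))
          * (∑ c₁ ∈ m₁.divisors, ∑ c₂ ∈ m₂.divisors,
            F k c₁ c₂ * (tau1k k (m₁ / c₁) : ℤ) * (tau1k k (m₂ / c₂) : ℤ)) := by
      rw [Finset.sum_mul]
      apply Finset.sum_congr rfl
      intro e₁ _
      rw [Finset.sum_comm]
      rw [Finset.sum_mul]
      apply Finset.sum_congr rfl
      intro e₂ _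
      rw [Finset.mul_sum]
      apply Finset.sum_congr rfl
      intro c₁ _
      rw [Finset.mul_sum]
    rw [hfactor]
    -- the prime-power double sum equals T k (a + b), by the local identity
    have hA : (∑ e₁ ∈ (p ^ a).divisors, ∑ e₂ ∈ (p ^ b).divisors,
        F k e₁ e₂ * (tau1k k (p ^ a / e₁) : ℤ) * (tau1k k (p ^ b / e₂) : ℤ))
        = T k (a + b) := by
      rw [Nat.divisors_prime_pow pp a, Nat.divisors_prime_pow pp b]
      simp only [Finset.sum_map, Function.Embedding.coeFn_mk]
      rw [← local_main k hk a b]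
      apply Finset.sum_congr rfl
      intro i hi
      simp only [Finset.mem_range, Nat.lt_succ_iff] at hi
      apply Finset.sum_congr rfl
      intro j hj
      simp only [Finset.mem_range, Nat.lt_succ_iff] at hj
      rw [F_pp k p i j pp, Nat.pow_div hi (by omega), Nat.pow_div hj (by omega),
        tau1k_pp k p (a - i) hk pp, tau1k_pp k p (b - j) hk pp]
      push_cast [T]
      ring
    rw [hA]
    -- apply the induction hypothesis to m₁ * m₂
    have hlt : m₁ * m₂ < p ^ a * m₁ * (p ^ b * m₂) := by
      have h2p : 2 ≤ p ^ (a + b) := by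
        calc 2 = 2 ^ 1 := rfl
        _ ≤ p ^ (a + b) := Nat.pow_le_pow_left (by omega) (a + b) |>.trans'
            (Nat.pow_le_pow_right (by omega) hab)
      calc m₁ * m₂ < 2 * (m₁ * m₂) := by
            have : 0 < m₁ * m₂ := by positivity
            omega
        _ ≤ p ^ (a + b) * (m₁ * m₂) := Nat.mul_le_mul_right _ h2p
        _ = p ^ a * m₁ * (p ^ b * m₂) := by rw [pow_add]; ring
    have hIH := ih (m₁ * m₂) hlt m₁ m₂ rfl hm₁ hm₂
    rw [← hIH]

/-- divisors of n as a finset of ℕ+ -/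
def DnEmb (n : ℕ) : {x // x ∈ n.divisors} ↪ ℕ+ :=
  ⟨fun d => (⟨(d : ℕ), Nat.pos_of_mem_divisors d.2⟩ : ℕ+),
    fun x y h => Subtype.ext (congrArg PNat.val h)⟩

def Dn (n : ℕ) : Finset ℕ+ := n.divisors.attach.map (DnEmb n)

lemma mem_Dn (n : ℕ) (d : ℕ+) : d ∈ Dn n ↔ (d : ℕ) ∈ n.divisors := by
  unfold Dn DnEmb
  simp only [Finset.mem_map, Finset.mem_attach, true_and, Function.Embedding.coeFn_mk]
  constructor
  · rintro ⟨x, rfl⟩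
    exact x.2
  · intro hd
    exact ⟨⟨(d : ℕ), hd⟩, Subtype.ext rfl⟩

lemma sum_Dn (n : ℕ) (ψ : ℕ → ℤ) : ∑ d ∈ Dn n, ψ (d : ℕ) = ∑ d ∈ n.divisors, ψ d := by
  unfold Dn DnEmb
  rw [Finset.sum_map]
  exact Finset.sum_attach n.divisors ψ


end BR

open BR in
theorem stmt2 (k : ℕ) (hk : 1 ≤ k) :
    ∃ f : ℕ+ × ℕ+ → ℤ,
      -- (i) multiplicativity
      (∀ m₁ m₂ n₁ n₂ : ℕ+,
        Nat.Coprime ((m₁ : ℕ) * (m₂ : ℕ)) ((n₁ : ℕ) * (n₂ : ℕ)) →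
        f (m₁ * n₁, m₂ * n₂) = f (m₁, m₂) * f (n₁, n₂)) ∧
      -- (ii) values at prime powers
      (∀ p : ℕ+, (p : ℕ).Prime → ∀ ν₁ ν₂ : ℕ,
        f (p ^ ν₁, p ^ ν₂) =
          if ν₁ = 0 ∧ ν₂ = 0 then 1
          else if 1 ≤ ν₁ ∧ 1 ≤ ν₂ ∧ ν₁ + ν₂ = k then 1
          else if 1 ≤ ν₁ ∧ 1 ≤ ν₂ ∧ ν₁ + ν₂ = k + 1 then -1
          else 0) ∧
      -- (iii) the generalized Busche–Ramanujan identity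
      (∀ n₁ n₂ : ℕ+,
        (tau1k k ((n₁ : ℕ) * (n₂ : ℕ)) : ℤ) =
          ∑' (d₁ : ℕ+) (d₂ : ℕ+),
            if (d₁ : ℕ) ∣ (n₁ : ℕ) ∧ (d₂ : ℕ) ∣ (n₂ : ℕ) then
              f (d₁, d₂) * (tau1k k ((n₁ : ℕ) / (d₁ : ℕ)) : ℤ) *
                (tau1k k ((n₂ : ℕ) / (d₂ : ℕ)) : ℤ)
            else 0) := by
  refine ⟨fun x => F k (x.1 : ℕ) (x.2 : ℕ), ?_, ?_, ?_⟩
  · intro m₁ m₂ n₁ n₂ cop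
    simpa only [PNat.mul_coe] using
      F_mul k (m₁ : ℕ) (m₂ : ℕ) (n₁ : ℕ) (n₂ : ℕ) m₁.ne_zero m₂.ne_zero n₁.ne_zero n₂.ne_zero cop
  · intro p hp ν₁ ν₂
    show F k ((p ^ ν₁ : ℕ+) : ℕ) ((p ^ ν₂ : ℕ+) : ℕ) = _
    rw [PNat.pow_coe, PNat.pow_coe, F_pp k (p : ℕ) ν₁ ν₂ hp]
    rfl
  · intro n₁ n₂
    have h1 : (n₁ : ℕ) ≠ 0 := n₁.ne_zero
    have h2 : (n₂ : ℕ) ≠ 0 := n₂.ne_zero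
    have hkey := key k hk ((n₁ : ℕ) * (n₂ : ℕ)) (n₁ : ℕ) (n₂ : ℕ) rfl h1 h2
    -- the inner tsum is a finite sum
    have hinner : ∀ d₁ : ℕ+,
        (∑' d₂ : ℕ+, if (d₁ : ℕ) ∣ (n₁ : ℕ) ∧ (d₂ : ℕ) ∣ (n₂ : ℕ) then
            F k (d₁ : ℕ) (d₂ : ℕ) * (tau1k k ((n₁ : ℕ) / (d₁ : ℕ)) : ℤ) *
              (tau1k k ((n₂ : ℕ) / (d₂ : ℕ)) : ℤ)
          else 0)
        = ∑ d₂ ∈ Dn (n₂ : ℕ), (if (d₁ : ℕ) ∣ (n₁ : ℕ) ∧ (d₂ : ℕ) ∣ (n₂ : ℕ) then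
            F k (d₁ : ℕ) (d₂ : ℕ) * (tau1k k ((n₁ : ℕ) / (d₁ : ℕ)) : ℤ) *
              (tau1k k ((n₂ : ℕ) / (d₂ : ℕ)) : ℤ)
          else 0) := by
      intro d₁
      apply tsum_eq_sum
      intro d₂ hd₂
      rw [if_neg]
      rintro ⟨-, hdvd⟩
      exact hd₂ ((mem_Dn _ _).mpr (Nat.mem_divisors.mpr ⟨hdvd, h2⟩))
    rw [tsum_congr hinner]
    rw [tsum_eq_sum (s := Dn (n₁ : ℕ)) (by
      intro d₁ hd₁
      apply Finset.sum_eq_zero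
      intro d₂ _
      rw [if_neg]
      rintro ⟨hdvd, -⟩
      exact hd₁ ((mem_Dn _ _).mpr (Nat.mem_divisors.mpr ⟨hdvd, h1⟩)))]
    rw [hkey]
    rw [sum_Dn (n₁ : ℕ) (fun d₁ => ∑ d₂ ∈ Dn (n₂ : ℕ),
      (if d₁ ∣ (n₁ : ℕ) ∧ (d₂ : ℕ) ∣ (n₂ : ℕ) then
        F k d₁ (d₂ : ℕ) * (tau1k k ((n₁ : ℕ) / d₁) : ℤ) *
          (tau1k k ((n₂ : ℕ) / (d₂ : ℕ)) : ℤ) else 0))]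
    apply Finset.sum_congr rfl
    intro d₁ hd₁
    rw [sum_Dn (n₂ : ℕ) (fun d₂ =>
      (if d₁ ∣ (n₁ : ℕ) ∧ d₂ ∣ (n₂ : ℕ) then
        F k d₁ d₂ * (tau1k k ((n₁ : ℕ) / d₁) : ℤ) *
          (tau1k k ((n₂ : ℕ) / d₂) : ℤ) else 0))]
    apply Finset.sum_congr rfl
    intro d₂ hd₂
    rw [if_pos ⟨(Nat.mem_divisors.mp hd₁).1, (Nat.mem_divisors.mp hd₂).1⟩]
end

section
/- Let r ≥ 2 and k ≥ 1 be fixed integers with rk > 2. Then Σ_{n₁,…,n_r ≤ x} τ_{1,k}(gcd(n₁,…,n_r)) = ζ(kr)·x^r + O(x^{r−1}) as x → ∞. -/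
open scoped BigOperators
open Filter Asymptotics
open Finset

set_option maxHeartbeats 1000000

lemma tau1k_eq (k N m : ℕ) (hk : 1 ≤ k) (hm : 1 ≤ m) (hmN : m ≤ N) :
    tau1k k m = ((Finset.Icc 1 N).filter fun b => b ^ k ∣ m).card := by
  unfold tau1k
  congr 1
  ext b
  simp only [mem_filter, Nat.mem_divisors, mem_Icc]
  constructor
  · rintro ⟨⟨hb, hm0⟩, hbk⟩
    exact ⟨⟨Nat.pos_of_dvd_of_pos hb hm, le_trans (Nat.le_of_dvd hm hb) hmN⟩, hbk⟩
  · rintro ⟨⟨hb1, hbN⟩, hbk⟩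
    exact ⟨⟨dvd_trans (dvd_pow_self b (by omega)) hbk, by omega⟩, hbk⟩

lemma count_eq (r k N : ℕ) (hr : 1 ≤ r) (hk : 1 ≤ k) :
    (∑ n ∈ Fintype.piFinset fun _ : Fin r => Finset.Icc 1 N,
        tau1k k (Finset.univ.gcd n))
      = ∑ b ∈ Finset.Icc 1 N, (N / b ^ k) ^ r := by
  have key : ∀ n ∈ Fintype.piFinset fun _ : Fin r => Finset.Icc 1 N,
      tau1k k (Finset.univ.gcd n)
        = ((Finset.Icc 1 N).filter fun b => b ^ k ∣ Finset.univ.gcd n).card := by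
    intro n hn
    have hn' : ∀ i, n i ∈ Finset.Icc 1 N := by
      simpa [Fintype.mem_piFinset] using hn
    have h0 := hn' ⟨0, by omega⟩
    rw [mem_Icc] at h0
    have hg : Finset.univ.gcd n ∣ n ⟨0, by omega⟩ := Finset.gcd_dvd (mem_univ _)
    have hg1 : 1 ≤ Finset.univ.gcd n := Nat.pos_of_dvd_of_pos hg (by omega)
    exact tau1k_eq k N _ hk hg1 (le_trans (Nat.le_of_dvd (by omega) hg) h0.2)
  rw [Finset.sum_congr rfl key]
  simp only [Finset.card_filter]
  rw [Finset.sum_comm]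
  refine Finset.sum_congr rfl fun b hb => ?_
  have : ∀ n, (b ^ k ∣ Finset.univ.gcd n) ↔ ∀ i : Fin r, b ^ k ∣ n i := by
    intro n
    rw [Finset.dvd_gcd_iff]
    simp
  simp only [this]
  rw [← Finset.card_filter]
  have hset : (Fintype.piFinset fun _ : Fin r => Finset.Icc 1 N).filter
      (fun n => ∀ i : Fin r, b ^ k ∣ n i)
      = Fintype.piFinset fun _ : Fin r => (Finset.Icc 1 N).filter fun m => b ^ k ∣ m := by
    ext n
    simp [Fintype.mem_piFinset, forall_and]
  rw [hset, Fintype.card_piFinset]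
  have : ((Finset.Icc 1 N).filter fun m => b ^ k ∣ m).card = N / b ^ k := by
    rw [show Finset.Icc 1 N = Finset.Ioc 0 N from rfl]
    exact Nat.Ioc_filter_dvd_card_eq_div N (b ^ k)
  simp [this]


set_option maxHeartbeats 1000000

lemma pow_sub_pow_le_real {a c : ℝ} (hc : 0 ≤ c) (hca : c ≤ a) (m : ℕ) :
    a ^ m - c ^ m ≤ m * a ^ (m - 1) * (a - c) := by
  have ha : 0 ≤ a := hc.trans hca
  rw [← geom_sum₂_mul a c m]
  have hb : (∑ i ∈ Finset.range m, a ^ i * c ^ (m - 1 - i)) ≤ m * a ^ (m - 1) := by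
    calc (∑ i ∈ Finset.range m, a ^ i * c ^ (m - 1 - i))
        ≤ ∑ _i ∈ Finset.range m, a ^ (m - 1) := by
          refine Finset.sum_le_sum fun i hi => ?_
          rw [Finset.mem_range] at hi
          calc a ^ i * c ^ (m - 1 - i) ≤ a ^ i * a ^ (m - 1 - i) := by gcongr
            _ = a ^ (m - 1) := by rw [← pow_add]; congr 1; omega
      _ = m * a ^ (m - 1) := by
          rw [Finset.sum_const, Finset.card_range, nsmul_eq_mul]
  exact mul_le_mul_of_nonneg_right hb (sub_nonneg.2 hca)

lemma key16 (r k : ℕ) (hr : 2 ≤ r) (hk : 1 ≤ k) (hrk : 2 < r * k) (N : ℕ) (hN : 1 ≤ N) :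
    |(∑ b ∈ Finset.Icc 1 N, ((N / b ^ k : ℕ) : ℝ) ^ r) -
        (∑' b : ℕ, 1 / (b : ℝ) ^ (k * r)) * (N : ℝ) ^ r|
      ≤ (1 + r) * (∑' b : ℕ, 1 / (b : ℝ) ^ 2) * (N : ℝ) ^ (r - 1) := by
  have hkr1 : 1 < k * r := by nlinarith
  have hkr3 : 3 ≤ k * r := by nlinarith
  have hkr2 : 2 ≤ k * (r - 1) := by
    rcases Nat.lt_or_ge k 2 with h | h
    · have hk1 : k = 1 := by omega
      subst hk1; omega
    · calc 2 = 2 * 1 := by norm_num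
        _ ≤ k * (r - 1) := Nat.mul_le_mul h (by omega)
  have hsum : Summable (fun b : ℕ => 1 / (b : ℝ) ^ (k * r)) :=
    Real.summable_one_div_nat_pow.mpr hkr1
  have hsum2 : Summable (fun b : ℕ => 1 / (b : ℝ) ^ 2) :=
    Real.summable_one_div_nat_pow.mpr one_lt_two
  set Z : ℝ := ∑' b : ℕ, 1 / (b : ℝ) ^ (k * r) with hZdef
  set Z2 : ℝ := ∑' b : ℕ, 1 / (b : ℝ) ^ 2 with hZ2def
  set F : ℕ → ℝ := fun b => (N : ℝ) ^ r * (1 / (b : ℝ) ^ (k * r)) with hFdef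
  have hsumF : Summable F := hsum.mul_left _
  have hNpos : (0 : ℝ) < N := by exact_mod_cast hN
  have hsplit : Z * (N : ℝ) ^ r
      = (∑ i ∈ Finset.range (N + 1), F i) + ∑' i : ℕ, F (i + (N + 1)) := by
    rw [Summable.sum_add_tsum_nat_add (N + 1) hsumF, hFdef, tsum_mul_left, mul_comm]
  have hrange : (∑ i ∈ Finset.range (N + 1), F i) = ∑ b ∈ Finset.Icc 1 N, F b := by
    have h0 : Finset.range (N + 1) = insert 0 (Finset.Icc 1 N) := by
      ext x; simp [Finset.mem_range, Finset.mem_Icc]; omega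
    rw [h0, Finset.sum_insert (by simp)]
    have hF0 : F 0 = 0 := by
      simp [hFdef, zero_pow (show k * r ≠ 0 by omega)]
    rw [hF0, zero_add]
  set A : ℝ := ∑ b ∈ Finset.Icc 1 N, ((N / b ^ k : ℕ) : ℝ) ^ r with hAdef
  set S : ℝ := ∑ b ∈ Finset.Icc 1 N, F b with hSdef
  set T : ℝ := ∑' i : ℕ, F (i + (N + 1)) with hTdef
  have hFb : ∀ b : ℕ, 1 ≤ b → F b = ((N : ℝ) / (b : ℝ) ^ k) ^ r := by
    intro b hb
    show (N : ℝ) ^ r * (1 / (b : ℝ) ^ (k * r)) = _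
    rw [div_pow, ← pow_mul, mul_one_div]
  have hc_le : ∀ b : ℕ, 1 ≤ b → ((N / b ^ k : ℕ) : ℝ) ≤ (N : ℝ) / (b : ℝ) ^ k := by
    intro b hb
    calc ((N / b ^ k : ℕ) : ℝ) ≤ (N : ℝ) / ((b ^ k : ℕ) : ℝ) := Nat.cast_div_le
      _ = (N : ℝ) / (b : ℝ) ^ k := by push_cast; ring
  have hAS : A ≤ S := by
    refine Finset.sum_le_sum fun b hb => ?_
    rw [Finset.mem_Icc] at hb
    rw [hFb b hb.1]
    exact pow_le_pow_left₀ (by positivity) (hc_le b hb.1) r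
  have hSA : S - A ≤ (r : ℝ) * ((N : ℝ) ^ (r - 1) * Z2) := by
    rw [hSdef, hAdef, ← Finset.sum_sub_distrib]
    have hterm : ∀ b ∈ Finset.Icc 1 N,
        F b - ((N / b ^ k : ℕ) : ℝ) ^ r ≤ (r : ℝ) * ((N : ℝ) ^ (r - 1) * (1 / (b : ℝ) ^ 2)) := by
      intro b hb
      rw [Finset.mem_Icc] at hb
      have hb1 : (1 : ℝ) ≤ (b : ℝ) := by exact_mod_cast hb.1
      have hbk : (0 : ℝ) < (b : ℝ) ^ k := by positivity
      set a : ℝ := (N : ℝ) / (b : ℝ) ^ k with hadef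
      set c : ℝ := ((N / b ^ k : ℕ) : ℝ) with hcdef
      have hc0 : 0 ≤ c := by positivity
      have hca : c ≤ a := hc_le b hb.1
      have ha0 : 0 ≤ a := hc0.trans hca
      have hac1 : a - c ≤ 1 := by
        have hmod := Nat.div_add_mod N (b ^ k)
        have hmodlt : N % b ^ k < b ^ k := Nat.mod_lt _ (pow_pos (by omega) k)
        have hlt : (N : ℝ) < ((N / b ^ k : ℕ) + 1 : ℝ) * (b : ℝ) ^ k := by
          have heq : (N : ℝ) = ((b ^ k : ℕ) : ℝ) * ((N / b ^ k : ℕ) : ℝ) + ((N % b ^ k : ℕ) : ℝ) := by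
            exact_mod_cast hmod.symm
          have h2 : ((N % b ^ k : ℕ) : ℝ) < ((b ^ k : ℕ) : ℝ) := by exact_mod_cast hmodlt
          push_cast at heq h2 ⊢
          nlinarith
        have := (div_lt_iff₀ hbk).2 hlt
        rw [← hadef, ← hcdef] at this
        linarith
      have h1 : F b - c ^ r ≤ (r : ℝ) * a ^ (r - 1) * (a - c) := by
        rw [hFb b hb.1, ← hadef]
        exact pow_sub_pow_le_real hc0 hca r
      have h2 : (r : ℝ) * a ^ (r - 1) * (a - c) ≤ (r : ℝ) * a ^ (r - 1) := by
        have := mul_le_mul_of_nonneg_left hac1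
          (show (0:ℝ) ≤ (r : ℝ) * a ^ (r - 1) by positivity)
        linarith [this]
      have h3 : a ^ (r - 1) ≤ (N : ℝ) ^ (r - 1) * (1 / (b : ℝ) ^ 2) := by
        rw [hadef, div_pow, ← pow_mul, div_eq_mul_one_div]
        have hpow : (b : ℝ) ^ 2 ≤ (b : ℝ) ^ (k * (r - 1)) := pow_le_pow_right₀ hb1 hkr2
        have hdiv : 1 / (b : ℝ) ^ (k * (r - 1)) ≤ 1 / (b : ℝ) ^ 2 :=
          one_div_le_one_div_of_le (by positivity) hpow
        exact mul_le_mul_of_nonneg_left hdiv (by positivity)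
      calc F b - c ^ r ≤ (r : ℝ) * a ^ (r - 1) := le_trans h1 h2
        _ ≤ (r : ℝ) * ((N : ℝ) ^ (r - 1) * (1 / (b : ℝ) ^ 2)) :=
            mul_le_mul_of_nonneg_left h3 (by positivity)
    calc (∑ b ∈ Finset.Icc 1 N, (F b - ((N / b ^ k : ℕ) : ℝ) ^ r))
        ≤ ∑ b ∈ Finset.Icc 1 N, (r : ℝ) * ((N : ℝ) ^ (r - 1) * (1 / (b : ℝ) ^ 2)) :=
          Finset.sum_le_sum hterm
      _ = (r : ℝ) * ((N : ℝ) ^ (r - 1) * ∑ b ∈ Finset.Icc 1 N, 1 / (b : ℝ) ^ 2) := by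
          rw [← Finset.mul_sum, ← Finset.mul_sum]
      _ ≤ (r : ℝ) * ((N : ℝ) ^ (r - 1) * Z2) := by
          have hle : (∑ b ∈ Finset.Icc 1 N, 1 / (b : ℝ) ^ 2) ≤ Z2 :=
            Summable.sum_le_tsum _ (fun i _ => by positivity) hsum2
          gcongr
  have hT0 : 0 ≤ T := tsum_nonneg fun i => by
    show (0:ℝ) ≤ (N : ℝ) ^ r * (1 / ((i + (N+1) : ℕ) : ℝ) ^ (k * r))
    positivity
  have hTle : T ≤ (N : ℝ) ^ (r - 1) * Z2 := by
    have hterm : ∀ i : ℕ, F (i + (N + 1)) ≤ (N : ℝ) ^ (r - 1) * (1 / ((i + (N + 1) : ℕ) : ℝ) ^ 2) := by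
      intro i
      set b : ℕ := i + (N + 1) with hbdef
      have hb1 : (1 : ℝ) ≤ (b : ℝ) := by exact_mod_cast (show 1 ≤ b by omega)
      have hbN : (N : ℝ) ≤ (b : ℝ) := by exact_mod_cast (show N ≤ b by omega)
      have hblow : (N : ℝ) * ((b : ℝ)) ^ 2 ≤ (b : ℝ) ^ (k * r) := by
        calc (N : ℝ) * (b : ℝ) ^ 2 ≤ (b : ℝ) * (b : ℝ) ^ 2 := by nlinarith
          _ = (b : ℝ) ^ 3 := by ring
          _ ≤ (b : ℝ) ^ (k * r) := pow_le_pow_right₀ hb1 hkr3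
      show (N : ℝ) ^ r * (1 / (b : ℝ) ^ (k * r)) ≤ _
      have hNr : (N : ℝ) ^ r = (N : ℝ) ^ (r - 1) * (N : ℝ) := by
        rw [← pow_succ]; congr 1; omega
      have hbkr : (0:ℝ) < (b:ℝ) ^ (k * r) := by positivity
      rw [mul_one_div, hNr, div_le_iff₀ hbkr]
      calc (N:ℝ)^(r-1) * (N:ℝ) = (N:ℝ)^(r-1) * ((N:ℝ) * (b:ℝ)^2) * (1/(b:ℝ)^2) := by
            field_simp
        _ ≤ (N:ℝ)^(r-1) * (b:ℝ)^(k*r) * (1/(b:ℝ)^2) := by gcongr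
        _ = (N:ℝ)^(r-1) * (1/(b:ℝ)^2) * (b:ℝ)^(k*r) := by ring
    have hsumtail : Summable (fun i : ℕ => F (i + (N + 1))) :=
      (summable_nat_add_iff (N + 1)).2 hsumF
    have hsumg : Summable (fun i : ℕ => (1 : ℝ) / ((i + (N + 1) : ℕ) : ℝ) ^ 2) :=
      (summable_nat_add_iff (N + 1)).2 hsum2
    calc T ≤ ∑' i : ℕ, (N : ℝ) ^ (r - 1) * (1 / ((i + (N + 1) : ℕ) : ℝ) ^ 2) :=
        Summable.tsum_le_tsum hterm hsumtail (hsumg.mul_left _)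
      _ = (N : ℝ) ^ (r - 1) * ∑' i : ℕ, (1 / ((i + (N + 1) : ℕ) : ℝ) ^ 2) := tsum_mul_left
      _ ≤ (N : ℝ) ^ (r - 1) * Z2 := by
          have hspl := (Summable.sum_add_tsum_nat_add (N + 1) hsum2).symm
          have hpos : 0 ≤ ∑ i ∈ Finset.range (N + 1), 1 / (i : ℝ) ^ 2 :=
            Finset.sum_nonneg fun i _ => by positivity
          have : (∑' i : ℕ, (1 / ((i + (N + 1) : ℕ) : ℝ) ^ 2)) ≤ Z2 := by
            push_cast at hspl ⊢
            linarith
          exact mul_le_mul_of_nonneg_left this (by positivity)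
  have hkey : Z * (N : ℝ) ^ r - A = (S - A) + T := by
    rw [hsplit, hrange]; ring
  have hnonneg : 0 ≤ Z * (N : ℝ) ^ r - A := by rw [hkey]; linarith
  rw [abs_sub_comm, abs_of_nonneg hnonneg, hkey]
  calc (S - A) + T ≤ (r : ℝ) * ((N : ℝ) ^ (r - 1) * Z2) + (N : ℝ) ^ (r - 1) * Z2 :=
      add_le_add hSA hTle
    _ = (1 + r) * Z2 * (N : ℝ) ^ (r - 1) := by ring

lemma zeta_re_eq (m : ℕ) (hm : 1 < m) :
    (riemannZeta (m : ℂ)).re = ∑' b : ℕ, 1 / (b : ℝ) ^ m := by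
  rw [zeta_nat_eq_tsum_of_gt_one hm,
    show (fun n : ℕ => 1 / (n : ℂ) ^ m) = fun n : ℕ => ((1 / (n : ℝ) ^ m : ℝ) : ℂ) by
      ext n; push_cast; ring,
    ← Complex.ofReal_tsum, Complex.ofReal_re]

theorem stmt16 (r k : ℕ) (hr : 2 ≤ r) (hk : 1 ≤ k) (hrk : 2 < r * k) :
    (fun x : ℝ =>
        (∑ n ∈ Fintype.piFinset fun _ : Fin r => Finset.Icc 1 ⌊x⌋₊,
          (tau1k k (Finset.univ.gcd n) : ℝ)) -
        (riemannZeta ((k : ℂ) * (r : ℂ))).re * x ^ (r : ℝ))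
      =O[atTop] fun x : ℝ => x ^ ((r : ℝ) - 1) := by
  have hkr1 : 1 < k * r := by nlinarith
  set Z : ℝ := ∑' b : ℕ, 1 / (b : ℝ) ^ (k * r) with hZdef
  set Z2 : ℝ := ∑' b : ℕ, 1 / (b : ℝ) ^ 2 with hZ2def
  have hZ0 : 0 ≤ Z := tsum_nonneg fun b => by positivity
  have hZ20 : 0 ≤ Z2 := tsum_nonneg fun b => by positivity
  have hzeta : (riemannZeta ((k : ℂ) * (r : ℂ))).re = Z := by
    rw [show (k : ℂ) * (r : ℂ) = ((k * r : ℕ) : ℂ) by push_cast; ring]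
    exact zeta_re_eq (k * r) hkr1
  rw [Asymptotics.isBigO_iff]
  refine ⟨(1 + r) * Z2 + r * Z, ?_⟩
  filter_upwards [eventually_ge_atTop (1 : ℝ)] with x hx
  have hx0 : (0 : ℝ) ≤ x := by linarith
  set N : ℕ := ⌊x⌋₊ with hNdef
  have hN1 : 1 ≤ N := Nat.le_floor (by exact_mod_cast hx)
  have hNx : (N : ℝ) ≤ x := Nat.floor_le hx0
  have hxN : x ≤ (N : ℝ) + 1 := (Nat.lt_floor_add_one x).le
  have hN0 : (0 : ℝ) ≤ (N : ℝ) := by positivity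
  have hsum_eq : (∑ n ∈ Fintype.piFinset fun _ : Fin r => Finset.Icc 1 N,
      (tau1k k (Finset.univ.gcd n) : ℝ))
      = ∑ b ∈ Finset.Icc 1 N, ((N / b ^ k : ℕ) : ℝ) ^ r := by
    rw [← Nat.cast_sum, count_eq r k N (by omega) hk]
    push_cast
    rfl
  have hxpow : x ^ (r : ℝ) = x ^ r := Real.rpow_natCast x r
  have hx1pow : x ^ ((r : ℝ) - 1) = x ^ (r - 1) := by
    rw [show (r : ℝ) - 1 = ((r - 1 : ℕ) : ℝ) by
        rw [Nat.cast_sub (by omega), Nat.cast_one], Real.rpow_natCast]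
  rw [hsum_eq, hzeta, hxpow, hx1pow, Real.norm_eq_abs, Real.norm_eq_abs]
  set A : ℝ := ∑ b ∈ Finset.Icc 1 N, ((N / b ^ k : ℕ) : ℝ) ^ r with hAdef
  have hd1 : |A - Z * (N : ℝ) ^ r| ≤ (1 + r) * Z2 * (N : ℝ) ^ (r - 1) :=
    key16 r k hr hk hrk N hN1
  have hNp : (N : ℝ) ^ (r - 1) ≤ x ^ (r - 1) := pow_le_pow_left₀ hN0 hNx _
  have hxr0 : (0 : ℝ) ≤ x ^ (r - 1) := by positivity
  have hNxr : (N : ℝ) ^ r ≤ x ^ r := pow_le_pow_left₀ hN0 hNx r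
  have hd2 : x ^ r - (N : ℝ) ^ r ≤ (r : ℝ) * x ^ (r - 1) := by
    have h := pow_sub_pow_le_real hN0 hNx r
    have hx1 : x - (N : ℝ) ≤ 1 := by linarith
    have h2 : (r : ℝ) * x ^ (r - 1) * (x - (N : ℝ)) ≤ (r : ℝ) * x ^ (r - 1) * 1 :=
      mul_le_mul_of_nonneg_left hx1 (by positivity)
    linarith
  have habs2 : |Z * (N : ℝ) ^ r - Z * x ^ r| ≤ Z * ((r : ℝ) * x ^ (r - 1)) := by
    rw [abs_sub_comm, abs_of_nonneg (by nlinarith)]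
    calc Z * x ^ r - Z * (N : ℝ) ^ r = Z * (x ^ r - (N : ℝ) ^ r) := by ring
      _ ≤ Z * ((r : ℝ) * x ^ (r - 1)) := mul_le_mul_of_nonneg_left hd2 hZ0
  have hstep : (1 + r) * Z2 * (N : ℝ) ^ (r - 1) ≤ (1 + r) * Z2 * x ^ (r - 1) :=
    mul_le_mul_of_nonneg_left hNp (by positivity)
  have habs1 : |x ^ (r - 1)| = x ^ (r - 1) := abs_of_nonneg hxr0
  rw [habs1]
  calc |A - Z * x ^ r| ≤ |A - Z * (N : ℝ) ^ r| + |Z * (N : ℝ) ^ r - Z * x ^ r| :=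
      abs_sub_le _ _ _
    _ ≤ (1 + r) * Z2 * x ^ (r - 1) + Z * ((r : ℝ) * x ^ (r - 1)) := by
        refine add_le_add (le_trans hd1 hstep) habs2
    _ = ((1 + r) * Z2 + r * Z) * x ^ (r - 1) := by ring
end

section
/- One has Σ_{n₁,n₂ ≤ x} τ(gcd(n₁,n₂)) = ζ(2)·x² + O(x·log x) as x → ∞. -/
open scoped BigOperators
open Filter Asymptotics

/-- `tau n` = τ(n), the number of divisors of `n`. -/
def tau (n : ℕ) : ℕ := n.divisors.card

open Finset Real in
lemma tau_gcd_eq (N n₁ n₂ : ℕ) (h₁ : n₁ ∈ Finset.Ioc 0 N) (h₂ : n₂ ∈ Finset.Ioc 0 N) :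
    tau (Nat.gcd n₁ n₂) = ((Finset.Ioc 0 N).filter fun d => d ∣ n₁ ∧ d ∣ n₂).card := by
  simp only [Finset.mem_Ioc] at h₁ h₂
  unfold tau
  congr 1
  ext d
  simp only [Nat.mem_divisors, Finset.mem_filter, Finset.mem_Ioc, Nat.dvd_gcd_iff]
  constructor
  · rintro ⟨⟨hd1, hd2⟩, hg⟩
    exact ⟨⟨Nat.pos_of_dvd_of_pos hd1 h₁.1, (Nat.le_of_dvd h₁.1 hd1).trans h₁.2⟩, hd1, hd2⟩
  · rintro ⟨⟨hd0, _⟩, hd1, hd2⟩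
    refine ⟨⟨hd1, hd2⟩, ?_⟩
    simp only [ne_eq, Nat.gcd_eq_zero_iff]
    omega

open Finset in
lemma sum_tau_gcd (N : ℕ) :
    (∑ n₁ ∈ Finset.Icc 1 N, ∑ n₂ ∈ Finset.Icc 1 N, tau (Nat.gcd n₁ n₂))
      = ∑ d ∈ Finset.Ioc 0 N, (N / d) ^ 2 := by
  have hIcc : Finset.Icc 1 N = Finset.Ioc 0 N := by ext a; simp; omega
  rw [hIcc]
  rw [Finset.sum_congr rfl fun n₁ h₁ => Finset.sum_congr rfl fun n₂ h₂ => tau_gcd_eq N n₁ n₂ h₁ h₂]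
  simp only [Finset.card_filter]
  rw [Finset.sum_congr rfl fun n₁ _ => Finset.sum_comm, Finset.sum_comm]
  refine Finset.sum_congr rfl fun d hd => ?_
  have hite : ∀ a b : ℕ, (if d ∣ a ∧ d ∣ b then 1 else 0)
      = (if d ∣ a then 1 else 0) * (if d ∣ b then 1 else 0) := by
    intro a b; by_cases h1 : d ∣ a <;> by_cases h2 : d ∣ b <;> simp [h1, h2]
  simp only [hite]
  rw [← Finset.sum_mul_sum]
  rw [← Finset.card_filter]
  simp only [Nat.Ioc_filter_dvd_card_eq_div, sq]

open Finset Filter Real in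
lemma sum_Ioc_of_zero (f : ℕ → ℝ) (hf : f 0 = 0) (n : ℕ) :
    ∑ d ∈ Ioc 0 n, f d = ∑ d ∈ range (n+1), f d := by
  induction n with
  | zero => simp [hf]
  | succ n ih =>
      rw [Finset.sum_range_succ, ← ih, Finset.sum_Ioc_succ_top (Nat.zero_le _)]

open Finset Filter Real in
lemma zeta2_partial_le (N : ℕ) :
    ∑ d ∈ Ioc 0 N, ((d:ℝ)^2)⁻¹ ≤ π^2/6 := by
  have h := hasSum_zeta_two
  simp only [one_div] at h
  exact sum_le_hasSum _ (fun i _ => by positivity) h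

open Finset Filter Real in
lemma zeta2_le_partial (N : ℕ) (hN : N ≠ 0) :
    π^2/6 ≤ (∑ d ∈ Ioc 0 N, ((d:ℝ)^2)⁻¹) + (N:ℝ)⁻¹ := by
  have h := hasSum_zeta_two
  simp only [one_div] at h
  have htend : Tendsto (fun n : ℕ => ∑ d ∈ Ioc 0 n, ((d:ℝ)^2)⁻¹) atTop (nhds (π^2/6)) := by
    have h2 := h.tendsto_sum_nat.comp (tendsto_add_atTop_nat 1)
    refine h2.congr fun n => ?_
    exact (sum_Ioc_of_zero (fun d => ((d:ℝ)^2)⁻¹) (by norm_num) n).symm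
  refine le_of_tendsto htend ?_
  filter_upwards [eventually_ge_atTop N] with n hn
  rw [← Finset.sum_Ioc_consecutive _ (Nat.zero_le N) hn]
  have h3 := sum_Ioc_inv_sq_le_sub (α := ℝ) hN hn
  have h4 : (0:ℝ) ≤ (n:ℝ)⁻¹ := by positivity
  linarith

open Finset Filter Real in
lemma floor_div_sq_bounds (N d : ℕ) (hd : 0 < d) :
    ((N / d : ℕ) : ℝ)^2 ≤ ((N:ℝ)/d)^2 ∧
    ((N:ℝ)/d)^2 ≤ ((N / d : ℕ) : ℝ)^2 + 2 * ((N:ℝ)/d) := by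
  have hdr : (0:ℝ) < d := by exact_mod_cast hd
  have h1 : ((N / d : ℕ) : ℝ) ≤ (N:ℝ)/d := Nat.cast_div_le
  have h2 : (N:ℝ)/d ≤ ((N / d : ℕ) : ℝ) + 1 := by
    rw [div_le_iff₀ hdr]
    have hnat : N < (N / d + 1) * d := by
      have hm := Nat.div_add_mod N d
      have hlt := Nat.mod_lt N hd
      calc N = d * (N / d) + N % d := hm.symm
        _ < d * (N / d) + d := by omega
        _ = (N / d + 1) * d := by ring
    have : (N:ℝ) < (((N / d : ℕ) : ℝ) + 1) * d := by exact_mod_cast hnat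
    linarith
  have h0 : (0:ℝ) ≤ ((N / d : ℕ) : ℝ) := Nat.cast_nonneg _
  constructor
  · nlinarith
  · nlinarith

open Finset Filter Real in
lemma main_bound (x : ℝ) (hx : 3 ≤ x) :
    |(∑ d ∈ Ioc 0 ⌊x⌋₊, ((⌊x⌋₊ / d : ℕ) : ℝ)^2) - π^2/6 * x^2| ≤ 12 * (x * Real.log x) := by
  set N := ⌊x⌋₊ with hNdef
  have hx0 : (0:ℝ) < x := by linarith
  have hN3 : 3 ≤ N := Nat.le_floor (by exact_mod_cast hx)
  have hN3r : (3:ℝ) ≤ (N:ℝ) := by exact_mod_cast hN3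
  have hNx : (N:ℝ) ≤ x := Nat.floor_le hx0.le
  have hxN : x < (N:ℝ) + 1 := Nat.lt_floor_add_one x
  have hlog : 1 ≤ Real.log x := by
    rw [Real.le_log_iff_exp_le hx0]
    calc Real.exp 1 ≤ 2.7182818286 := Real.exp_one_lt_d9.le
      _ ≤ 3 := by norm_num
      _ ≤ x := hx
  set S := ∑ d ∈ Ioc 0 N, ((N / d : ℕ) : ℝ)^2 with hS
  set Z := ∑ d ∈ Ioc 0 N, ((d:ℝ)^2)⁻¹ with hZ
  set H := ∑ d ∈ Ioc 0 N, (d:ℝ)⁻¹ with hH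
  set T := ∑ d ∈ Ioc 0 N, ((N:ℝ)/(d:ℝ))^2 with hT
  have hTZ : T = (N:ℝ)^2 * Z := by
    rw [hT, hZ, Finset.mul_sum]
    refine Finset.sum_congr rfl fun d hd => ?_
    rw [div_pow, div_eq_mul_inv]
  have hST : S ≤ T := by
    refine Finset.sum_le_sum fun d hd => ?_
    exact (floor_div_sq_bounds N d (Finset.mem_Ioc.mp hd).1).1
  have hTS : T ≤ S + 2 * (N:ℝ) * H := by
    have : T ≤ ∑ d ∈ Ioc 0 N, (((N / d : ℕ) : ℝ)^2 + 2 * ((N:ℝ)/d)) := by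
      refine Finset.sum_le_sum fun d hd => ?_
      exact (floor_div_sq_bounds N d (Finset.mem_Ioc.mp hd).1).2
    rw [Finset.sum_add_distrib] at this
    refine this.trans (le_of_eq ?_)
    congr 1
    rw [hH, Finset.mul_sum]
    refine Finset.sum_congr rfl fun d hd => ?_
    rw [div_eq_mul_inv]; ring
  have hH0 : 0 ≤ H := Finset.sum_nonneg fun d _ => by positivity
  have hHbound : H ≤ 1 + Real.log x := by
    have h1 : H = (harmonic N : ℝ) := by
      rw [hH, harmonic_eq_sum_Icc]
      have hIcc : Finset.Icc 1 N = Finset.Ioc 0 N := by ext a; simp; omega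
      rw [← hIcc]
      push_cast
      rfl
    have h2 := harmonic_le_one_add_log N
    have h3 : Real.log (N:ℝ) ≤ Real.log x := Real.log_le_log (by positivity) hNx
    rw [h1]; linarith
  have hZu : Z ≤ π^2/6 := zeta2_partial_le N
  have hZl : π^2/6 - (N:ℝ)⁻¹ ≤ Z := by
    have := zeta2_le_partial N (by omega)
    linarith
  have hpi3 : π^2/6 ≤ 3 := by nlinarith [Real.pi_le_four, Real.pi_pos]
  have hpi0 : 0 ≤ π^2/6 := by positivity
  have hN0 : (0:ℝ) < (N:ℝ) := by linarith
  have hsq : (N:ℝ)^2 ≤ x^2 := by nlinarith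
  have hx2N2 : x^2 - (N:ℝ)^2 ≤ 2*x := by nlinarith
  have hmul1 : (N:ℝ)^2 * Z ≤ (N:ℝ)^2 * (π^2/6) :=
    mul_le_mul_of_nonneg_left hZu (sq_nonneg _)
  have hNinv : (N:ℝ)^2 * (N:ℝ)⁻¹ = (N:ℝ) := by
    rw [sq, mul_assoc, mul_inv_cancel₀ hN0.ne', mul_one]
  have hmul2 : π^2/6 * (N:ℝ)^2 - (N:ℝ) ≤ (N:ℝ)^2 * Z := by
    have h := mul_le_mul_of_nonneg_left hZl (sq_nonneg (N:ℝ))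
    have hexp : (N:ℝ)^2 * (π^2/6 - (N:ℝ)⁻¹) = π^2/6 * (N:ℝ)^2 - (N:ℝ) := by
      rw [mul_sub, hNinv]; ring
    linarith [hexp ▸ h]
  have hmul3 : (N:ℝ) * H ≤ x * (1 + Real.log x) :=
    mul_le_mul hNx hHbound hH0 hx0.le
  have hd0 : 0 ≤ x^2 - (N:ℝ)^2 := by linarith
  have hcx : π^2/6 * x^2 - π^2/6 * (N:ℝ)^2 ≤ 6*x := by
    have h := mul_le_mul_of_nonneg_right hpi3 hd0
    have : π^2/6 * (x^2 - (N:ℝ)^2) = π^2/6 * x^2 - π^2/6 * (N:ℝ)^2 := by ring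
    linarith
  have hxl : x ≤ x * Real.log x := by nlinarith
  rw [abs_le]
  constructor
  · -- lower bound: S ≥ π²/6 x² - 12 x log x
    have hlb : (N:ℝ)^2 * Z - 2 * (N:ℝ) * H ≤ S := by rw [← hTZ]; linarith
    linarith
  · -- upper bound
    have hub : S ≤ (N:ℝ)^2 * (π^2/6) := by rw [← hTZ] at hmul1; linarith
    rw [mul_comm] at hub
    have hup : (π^2/6) * (N:ℝ)^2 ≤ (π^2/6) * x^2 := mul_le_mul_of_nonneg_left hsq hpi0
    linarith

theorem stmt17 :
    (fun x : ℝ =>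
        (∑ n₁ ∈ Finset.Icc 1 ⌊x⌋₊, ∑ n₂ ∈ Finset.Icc 1 ⌊x⌋₊,
          (tau (Nat.gcd n₁ n₂) : ℝ)) -
        (riemannZeta 2).re * x ^ 2)
      =O[atTop] fun x : ℝ => x * Real.log x := by
  have hzeta : (riemannZeta 2).re = Real.pi^2/6 := by
    rw [riemannZeta_two]
    have : ((Real.pi : ℂ))^2/6 = ((Real.pi^2/6 : ℝ) : ℂ) := by push_cast; ring
    rw [this, Complex.ofReal_re]
  rw [isBigO_iff]
  refine ⟨12, ?_⟩
  filter_upwards [eventually_ge_atTop (3:ℝ)] with x hx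
  have hx0 : (0:ℝ) < x := by linarith
  have hlog : 1 ≤ Real.log x := by
    rw [Real.le_log_iff_exp_le hx0]
    calc Real.exp 1 ≤ 2.7182818286 := Real.exp_one_lt_d9.le
      _ ≤ 3 := by norm_num
      _ ≤ x := hx
  have hsum : (∑ n₁ ∈ Finset.Icc 1 ⌊x⌋₊, ∑ n₂ ∈ Finset.Icc 1 ⌊x⌋₊,
      (tau (Nat.gcd n₁ n₂) : ℝ)) = ∑ d ∈ Finset.Ioc 0 ⌊x⌋₊, ((⌊x⌋₊ / d : ℕ) : ℝ)^2 := by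
    have := sum_tau_gcd ⌊x⌋₊
    have hcast : (∑ n₁ ∈ Finset.Icc 1 ⌊x⌋₊, ∑ n₂ ∈ Finset.Icc 1 ⌊x⌋₊,
        (tau (Nat.gcd n₁ n₂) : ℝ))
        = ((∑ n₁ ∈ Finset.Icc 1 ⌊x⌋₊, ∑ n₂ ∈ Finset.Icc 1 ⌊x⌋₊,
          tau (Nat.gcd n₁ n₂) : ℕ) : ℝ) := by push_cast; rfl
    rw [hcast, this]
    push_cast
    rfl
  rw [hsum, hzeta]
  have hmb := main_bound x hx
  have hnorm1 : ‖(∑ d ∈ Finset.Ioc 0 ⌊x⌋₊, ((⌊x⌋₊ / d : ℕ) : ℝ)^2) - Real.pi^2/6 * x^2‖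
      = |(∑ d ∈ Finset.Ioc 0 ⌊x⌋₊, ((⌊x⌋₊ / d : ℕ) : ℝ)^2) - Real.pi^2/6 * x^2| :=
    Real.norm_eq_abs _
  have hnorm2 : ‖x * Real.log x‖ = x * Real.log x :=
    Real.norm_of_nonneg (by nlinarith)
  rw [Real.norm_eq_abs, hnorm2]
  exact hmb
end

section
/- Let r ≥ 2 be a fixed integer and let f : ℕ₊ → ℂ be an arbitrary arithmetic function. Then for every real x ≥ 1, Σ_{n₁,…,n_r ≤ x} f(gcd(n₁,…,n_r)) = Σ_{d ≤ x} (μ * f)(d) · ⌊x/d⌋^r, where μ * f denotes the Dirichlet convolution of the Möbius function μ with f. -/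
open scoped BigOperators

theorem stmt18 (r : ℕ) (hr : 2 ≤ r) (f : ℕ+ → ℂ) (x : ℝ) (hx : 1 ≤ x) :
    ∑ n ∈ Fintype.piFinset fun _ : Fin r => Finset.Icc 1 ⌊x⌋₊,
        f (Finset.univ.gcd n).toPNat' =
      ∑ d ∈ Finset.Icc 1 ⌊x⌋₊,
        (∑ e ∈ d.divisors, (ArithmeticFunction.moebius e : ℂ) * f (d / e).toPNat') *
          (⌊x / (d : ℝ)⌋₊ : ℂ) ^ r := by
  set N := ⌊x⌋₊ with hNdef
  have hN1 : 1 ≤ N := Nat.le_floor (by exact_mod_cast hx)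
  set g : ℕ → ℂ := fun d => ∑ e ∈ d.divisors, (ArithmeticFunction.moebius e : ℂ) * f (d/e).toPNat' with hg
  have hinv : ∀ m > 0, ∑ d ∈ m.divisors, g d = f m.toPNat' := by
    rw [ArithmeticFunction.sum_eq_iff_sum_smul_moebius_eq (f := g) (g := fun m => f m.toPNat')]
    intro n hn
    simp only [hg]
    rw [← Nat.sum_divisorsAntidiagonal (fun a b => (ArithmeticFunction.moebius a : ℂ) * f b.toPNat')]
    refine Finset.sum_congr rfl fun p hp => ?_
    rw [zsmul_eq_mul]
  have hgcdpos : ∀ n ∈ Fintype.piFinset fun _ : Fin r => Finset.Icc 1 N,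
      0 < Finset.univ.gcd n ∧ Finset.univ.gcd n ≤ N := by
    intro n hn
    rw [Fintype.mem_piFinset] at hn
    have h0 := hn ⟨0, by omega⟩
    rw [Finset.mem_Icc] at h0
    have hdvd : Finset.univ.gcd n ∣ n ⟨0, by omega⟩ := Finset.gcd_dvd (Finset.mem_univ _)
    constructor
    · refine Nat.pos_of_ne_zero fun hz => ?_
      have := Finset.gcd_eq_zero_iff.mp hz ⟨0, by omega⟩ (Finset.mem_univ _)
      omega
    · exact le_trans (Nat.le_of_dvd (by omega) hdvd) h0.2
  calc ∑ n ∈ Fintype.piFinset fun _ : Fin r => Finset.Icc 1 N,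
        f (Finset.univ.gcd n).toPNat'
      = ∑ n ∈ Fintype.piFinset fun _ : Fin r => Finset.Icc 1 N,
        ∑ d ∈ Finset.Icc 1 N, if d ∣ Finset.univ.gcd n then g d else 0 := by
        refine Finset.sum_congr rfl fun n hn => ?_
        obtain ⟨hpos, hle⟩ := hgcdpos n hn
        rw [← Finset.sum_filter]
        have : (Finset.Icc 1 N).filter (· ∣ Finset.univ.gcd n)
            = (Finset.univ.gcd n).divisors := by
          ext d
          simp only [Finset.mem_filter, Finset.mem_Icc, Nat.mem_divisors]
          constructor
          · rintro ⟨⟨h1, h2⟩, h3⟩; exact ⟨h3, by omega⟩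
          · rintro ⟨h1, h2⟩
            exact ⟨⟨Nat.pos_of_dvd_of_pos h1 hpos, le_trans (Nat.le_of_dvd hpos h1) hle⟩, h1⟩
        rw [this, hinv _ hpos]
    _ = ∑ d ∈ Finset.Icc 1 N, ∑ n ∈ Fintype.piFinset fun _ : Fin r => Finset.Icc 1 N,
          if d ∣ Finset.univ.gcd n then g d else 0 := Finset.sum_comm
    _ = ∑ d ∈ Finset.Icc 1 N, g d * (⌊x / (d : ℝ)⌋₊ : ℂ) ^ r := by
        refine Finset.sum_congr rfl fun d hd => ?_
        rw [Finset.mem_Icc] at hd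
        rw [← Finset.sum_filter, Finset.sum_const, nsmul_eq_mul, mul_comm]
        congr 1
        have hfil : (Fintype.piFinset fun _ : Fin r => Finset.Icc 1 N).filter
            (fun n => d ∣ Finset.univ.gcd n)
            = Fintype.piFinset fun _ : Fin r => (Finset.Icc 1 N).filter (d ∣ ·) := by
          ext n
          simp only [Finset.mem_filter, Fintype.mem_piFinset, Finset.dvd_gcd_iff]
          constructor
          · rintro ⟨h1, h2⟩ i; exact ⟨h1 i, h2 i (Finset.mem_univ _)⟩
          · intro h; exact ⟨fun i => (h i).1, fun i _ => (h i).2⟩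
        rw [hfil, Fintype.card_piFinset]
        have hcard : ((Finset.Icc 1 N).filter (d ∣ ·)).card = N / d := by
          rw [show Finset.Icc 1 N = Finset.Ioc 0 N from (Finset.Icc_add_one_left_eq_Ioc 0 N)]
          exact Nat.Ioc_filter_dvd_card_eq_div N d
        have hfloor : ⌊x / (d : ℝ)⌋₊ = N / d := Nat.floor_div_natCast x d
        rw [Finset.prod_const, hcard, hfloor]
        simp
end

section
/- Let k ≥ 2 be a fixed integer. Then ∏_p (1−1/p)² · Σ_{ν₁,ν₂ ≥ 0} (⌊(ν₁+ν₂)/k⌋+1)·p^{−(ν₁+ν₂)} = ζ(k)² · ∏_p (1 + (k−1)/p^k − k/p^{k+1}), where both products are taken over all primes p and converge. -/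
open scoped BigOperators

lemma aux_mult_one_add {ι : Type*} {u : ι → ℝ} (hu : ∀ i, 0 ≤ u i) (hs : Summable u) :
    Multipliable (fun i => 1 + u i) := by
  have hpos : ∀ i, (0:ℝ) < 1 + u i := fun i => by linarith [hu i]
  have hlog : Summable (fun i => Real.log (1 + u i)) := by
    refine Summable.of_nonneg_of_le (fun i => Real.log_nonneg (by linarith [hu i]))
      (fun i => ?_) hs
    have := Real.log_le_sub_one_of_pos (hpos i)
    linarith
  exact ⟨_, (hlog.hasSum.rexp).congr_fun (fun i => (Real.exp_log (hpos i)).symm)⟩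

lemma aux_hasSum_mul {f g : ℕ → ℝ} {s t : ℝ} (hf : HasSum f s) (hg : HasSum g t)
    (hf' : ∀ i, 0 ≤ f i) (hg' : ∀ i, 0 ≤ g i) :
    HasSum (fun ν : ℕ × ℕ => f ν.1 * g ν.2) (s * t) := by
  have hsum : Summable fun ν : ℕ × ℕ => f ν.1 * g ν.2 :=
    hf.summable.mul_of_nonneg hg.summable hf' hg'
  rw [hf.mul_eq hg hsum.hasSum]
  exact hsum.hasSum


lemma aux_inner (k : ℕ) (hk : 1 ≤ k) (x : ℝ) (h0 : 0 < x) (h1 : x < 1) :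
    HasSum (fun ν : ℕ × ℕ => (((ν.1 + ν.2) / k + 1 : ℕ) : ℝ) * x ^ (ν.1 + ν.2))
      (1/((1-x)^2*(1-x^k)) + (k:ℝ)*x^k/((1-x)*(1-x^k)^2)) := by
  have hk0 : 0 < k := hk
  have hy1 : x ^ k < 1 := pow_lt_one₀ h0.le h1 (by omega)
  have hy0 : (0:ℝ) < x ^ k := pow_pos h0 k
  have h1x : (0:ℝ) < 1 - x := by linarith
  have h1y : (0:ℝ) < 1 - x ^ k := by linarith
  have hgeo : HasSum (fun i : ℕ => x ^ i) (1 - x)⁻¹ := hasSum_geometric_of_lt_one h0.le h1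
  have hnorm : ‖x‖ < 1 := by rwa [Real.norm_eq_abs, abs_of_pos h0]
  have hnormy : ‖x ^ k‖ < 1 := by
    rwa [Real.norm_eq_abs, abs_of_pos hy0]
  -- A : sum of (i+1) x^i
  have hA : HasSum (fun i : ℕ => ((i:ℝ) + 1) * x ^ i) (1/(1-x)^2) := by
    have h := (hasSum_coe_mul_geometric_of_norm_lt_one hnorm).add hgeo
    have hfe : (fun i : ℕ => ((i:ℝ) + 1) * x ^ i) = fun i : ℕ => (i:ℝ) * x ^ i + x ^ i := by
      funext i; ring
    rw [hfe]
    convert h using 1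
    · rfl
    field_simp
    ring
  -- B : sum of x^(k j)
  have hB : HasSum (fun j : ℕ => x ^ (k * j)) (1 - x ^ k)⁻¹ := by
    have := hasSum_geometric_of_lt_one hy0.le hy1
    simpa [pow_mul] using this
  -- C : sum of (k j) x^(k j)
  have hC : HasSum (fun j : ℕ => (k:ℝ) * (j:ℝ) * x ^ (k * j))
      ((k:ℝ) * (x ^ k / (1 - x ^ k) ^ 2)) := by
    have := (hasSum_coe_mul_geometric_of_norm_lt_one hnormy).mul_left (k:ℝ)
    simpa [pow_mul, mul_assoc] using this
  -- G : sum over pairs (i,j) of (i + k j + 1) x^(i + k j)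
  have hG1 := aux_hasSum_mul hA hB (fun i => by positivity) (fun j => by positivity)
  have hG2 := aux_hasSum_mul hgeo hC (fun i => by positivity) (fun j => by positivity)
  have hG : HasSum (fun ν : ℕ × ℕ => ((ν.1:ℝ) + (k:ℝ) * (ν.2:ℝ) + 1) * x ^ (ν.1 + k * ν.2))
      (1/((1-x)^2*(1-x^k)) + (k:ℝ)*x^k/((1-x)*(1-x^k)^2)) := by
    have h := hG1.add hG2
    convert h using 1
    · funext ν
      rw [pow_add]
      ring
    · field_simp
  -- transfer to H (n,j) = if k*j ≤ n then (n+1) x^n else 0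
  set T := 1/((1-x)^2*(1-x^k)) + (k:ℝ)*x^k/((1-x)*(1-x^k)^2) with hT
  set H : ℕ × ℕ → ℝ := fun q => if k * q.2 ≤ q.1 then ((q.1:ℝ) + 1) * x ^ q.1 else 0 with hHdef
  have hinj : Function.Injective (fun q : ℕ × ℕ => (q.1 + k * q.2, q.2)) := by
    intro ⟨i, j⟩ ⟨i', j'⟩ h
    simp only [Prod.mk.injEq] at h
    obtain ⟨h1', h2'⟩ := h
    subst h2'
    exact Prod.ext (by omega) rfl
  have hH : HasSum H T := by
    have hvanish : ∀ q ∉ Set.range (fun q : ℕ × ℕ => (q.1 + k * q.2, q.2)), H q = 0 := by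
      rintro ⟨n, j⟩ hq
      by_cases hle : k * j ≤ n
      · exact absurd ⟨(n - k * j, j), by simp; omega⟩ hq
      · simp [hHdef, hle]
    rw [← Function.Injective.hasSum_iff hinj hvanish]
    convert hG using 1
    funext ⟨i, j⟩
    simp only [Function.comp_apply, hHdef]
    rw [if_pos (by omega)]
    push_cast
    ring
  -- fiberwise over n for H
  have hfib : ∀ n : ℕ, HasSum (fun j => H (n, j)) (((n / k + 1 : ℕ) : ℝ) * (((n:ℝ) + 1) * x ^ n)) := by
    intro n
    have hvan : ∀ j ∉ Finset.range (n / k + 1), H (n, j) = 0 := by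
      intro j hj
      simp only [Finset.mem_range] at hj
      have hle : ¬ k * j ≤ n := by
        intro hle
        refine hj ?_
        have : j ≤ n / k := (Nat.le_div_iff_mul_le hk0).mpr (by rwa [Nat.mul_comm] at hle)
        omega
      simp [hHdef, hle]
    have h := hasSum_sum_of_ne_finset_zero (L := SummationFilter.unconditional ℕ) hvan
    have hconst : ∀ j ∈ Finset.range (n / k + 1), H (n, j) = ((n:ℝ) + 1) * x ^ n := by
      intro j hj
      simp only [Finset.mem_range] at hj
      have hle : k * j ≤ n := by
        have hj' : j ≤ n / k := by omega
        calc k * j = j * k := by ring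
          _ ≤ n := (Nat.le_div_iff_mul_le hk0).mp hj'
      simp [hHdef, hle]
    rw [Finset.sum_congr rfl hconst, Finset.sum_const, Finset.card_range, nsmul_eq_mul] at h
    exact h
  have hStep : HasSum (fun n : ℕ => ((n / k + 1 : ℕ) : ℝ) * (((n:ℝ) + 1) * x ^ n)) T :=
    hH.prod_fiberwise hfib
  -- Step F : back to pairs with a n := (n/k+1) x^n
  set a : ℕ → ℝ := fun n => ((n / k + 1 : ℕ) : ℝ) * x ^ n with ha
  set H2 : ℕ × ℕ → ℝ := fun q => if q.2 ≤ q.1 then a q.1 else 0 with hH2def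
  have hfib2 : ∀ n : ℕ, HasSum (fun j => H2 (n, j)) (((n:ℝ) + 1) * a n) := by
    intro n
    have hvan : ∀ j ∉ Finset.range (n + 1), H2 (n, j) = 0 := by
      intro j hj
      simp only [Finset.mem_range] at hj
      have : ¬ j ≤ n := by omega
      simp [hH2def, this]
    have h := hasSum_sum_of_ne_finset_zero (L := SummationFilter.unconditional ℕ) hvan
    have hconst : ∀ j ∈ Finset.range (n + 1), H2 (n, j) = a n := by
      intro j hj
      simp only [Finset.mem_range] at hj
      simp [hH2def, show j ≤ n by omega]
    rw [Finset.sum_congr rfl hconst, Finset.sum_const, Finset.card_range, nsmul_eq_mul] at h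
    convert h using 1
    push_cast
    ring
  have hStep' : HasSum (fun n : ℕ => ((n:ℝ) + 1) * a n) T := by
    refine hStep.congr_fun fun n => ?_
    simp only [ha]
    ring
  have hsum2 : Summable H2 := by
    refine (summable_prod_of_nonneg ?_).mpr ⟨fun n => (hfib2 n).summable, ?_⟩
    · intro q
      simp only [hH2def, Pi.zero_apply]
      split
      · positivity
      · exact le_rfl
    · refine hStep'.summable.congr fun n => ((hfib2 n).tsum_eq).symm
  have hH2 : HasSum H2 T := by
    have h := hsum2.hasSum
    have h2 := h.prod_fiberwise hfib2
    rwa [h2.unique hStep'] at h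
  have hinj2 : Function.Injective (fun q : ℕ × ℕ => (q.1 + q.2, q.2)) := by
    intro ⟨i, j⟩ ⟨i', j'⟩ h
    simp only [Prod.mk.injEq] at h
    obtain ⟨h1', h2'⟩ := h
    subst h2'
    exact Prod.ext (by omega) rfl
  have hvanish2 : ∀ q ∉ Set.range (fun q : ℕ × ℕ => (q.1 + q.2, q.2)), H2 q = 0 := by
    rintro ⟨n, j⟩ hq
    by_cases hle : j ≤ n
    · exact absurd ⟨(n - j, j), by simp; omega⟩ hq
    · simp [hH2def, hle]
  have hfinal := (Function.Injective.hasSum_iff hinj2 hvanish2).mpr hH2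
  refine hfinal.congr_fun fun ⟨i, j⟩ => ?_
  simp [hH2def, ha]

lemma aux_hb (k : ℕ) (hk : 2 ≤ k) (P : ℝ) (hP : 2 ≤ P) :
    0 ≤ (1 - 1/P^k)⁻¹ - 1 ∧ (1 - 1/P^k)⁻¹ - 1 ≤ 2 * (1/P^2) := by
  have hP0 : (0:ℝ) < P := by linarith
  have h2k : P^2 ≤ P^k := pow_le_pow_right₀ (by linarith) hk
  have hQ2 : (4:ℝ) ≤ P^2 := by nlinarith
  have ht0 : (0:ℝ) < 1/P^k := by positivity
  have ht2 : 1/P^k ≤ 1/P^2 := by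
    apply one_div_le_one_div_of_le (by positivity) h2k
  have h14 : 1/P^2 ≤ 1/4 := by
    apply one_div_le_one_div_of_le (by norm_num) hQ2
  have hden : (0:ℝ) < 1 - 1/P^k := by linarith
  have hne : P^k - 1 ≠ 0 := by nlinarith
  have heq : (1 - 1/P^k)⁻¹ - 1 = (1/P^k)/(1 - 1/P^k) := by
    field_simp
    ring
  rw [heq]
  constructor
  · positivity
  · rw [div_le_iff₀ hden]
    nlinarith

lemma aux_gb (k : ℕ) (hk : 2 ≤ k) (P : ℝ) (hP : 2 ≤ P) :
    0 ≤ ((k:ℝ)-1)/P^k - (k:ℝ)/P^(k+1) ∧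
      ((k:ℝ)-1)/P^k - (k:ℝ)/P^(k+1) ≤ (k:ℝ) * (1/P^2) := by
  have hP0 : (0:ℝ) < P := by linarith
  have hk2 : (2:ℝ) ≤ (k:ℝ) := by exact_mod_cast hk
  have hQ : (0:ℝ) < P^k := pow_pos hP0 k
  have h2k : P^2 ≤ P^k := pow_le_pow_right₀ (by linarith) hk
  constructor
  · rw [sub_nonneg, div_le_div_iff₀ (by positivity) (by positivity), pow_succ]
    nlinarith [mul_le_mul_of_nonneg_left hP (mul_pos (show (0:ℝ) < (k:ℝ)-1 by linarith) hQ).le,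
      mul_le_mul_of_nonneg_right hk2 hQ.le]
  · have h1 : (0:ℝ) ≤ (k:ℝ)/P^(k+1) := by positivity
    have h2 : ((k:ℝ)-1)/P^k ≤ (k:ℝ)/P^2 := by
      apply div_le_div₀ (by positivity) (by linarith) (by positivity) h2k
    rw [mul_one_div]
    linarith

lemma aux_field (K x t : ℝ) (h1 : 1 - x ≠ 0) (h2 : 1 - t ≠ 0) :
    (1-x)^2 * (1/((1-x)^2*(1-t)) + K*t/((1-x)*(1-t)^2))
      = ((1-t)⁻¹)^2 * (1 + (K-1)*t - K*(t*x)) := by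
  field_simp
  ring

lemma aux_key (k : ℕ) (hk : 2 ≤ k) (P : ℝ) (hP : 2 ≤ P) :
    (1 - 1/P)^2 * (1/((1-1/P)^2*(1-(1/P)^k)) + (k:ℝ)*(1/P)^k/((1-1/P)*(1-(1/P)^k)^2))
      = ((1 - 1/P^k)⁻¹)^2 * (1 + ((k:ℝ)-1)/P^k - (k:ℝ)/P^(k+1)) := by
  have hP0 : (0:ℝ) < P := by linarith
  have h2k : P^2 ≤ P^k := pow_le_pow_right₀ (by linarith) hk
  have hQ2 : (4:ℝ) ≤ P^2 := by nlinarith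
  have hx1 : 1/P < 1 := by rw [div_lt_one hP0]; linarith
  have h1x : (1:ℝ) - 1/P ≠ 0 := by
    have : 1/P ≤ 1/2 := by apply one_div_le_one_div_of_le <;> norm_num <;> linarith
    linarith
  have hyk : (1/P)^k = 1/P^k := by rw [div_pow, one_pow]
  have h1y : (1:ℝ) - 1/P^k ≠ 0 := by
    have h1 : 1/P^k ≤ 1/P^2 := one_div_le_one_div_of_le (by positivity) h2k
    have h2 : 1/P^2 ≤ 1/4 := one_div_le_one_div_of_le (by norm_num) hQ2
    linarith
  rw [hyk, aux_field (k:ℝ) (1/P) (1/P^k) h1x h1y, pow_succ]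
  ring


theorem stmt19 (k : ℕ) (hk : 2 ≤ k) :
    Multipliable (fun p : Nat.Primes =>
        (1 - 1 / ((p : ℕ) : ℝ)) ^ 2 *
          ∑' ν : ℕ × ℕ,
            (((ν.1 + ν.2) / k + 1 : ℕ) : ℝ) / ((p : ℕ) : ℝ) ^ (ν.1 + ν.2)) ∧
    Multipliable (fun p : Nat.Primes =>
        1 + ((k : ℝ) - 1) / ((p : ℕ) : ℝ) ^ k - (k : ℝ) / ((p : ℕ) : ℝ) ^ (k + 1)) ∧
    (∏' p : Nat.Primes,
        ((1 - 1 / ((p : ℕ) : ℝ)) ^ 2 *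
          ∑' ν : ℕ × ℕ,
            (((ν.1 + ν.2) / k + 1 : ℕ) : ℝ) / ((p : ℕ) : ℝ) ^ (ν.1 + ν.2))) =
      (riemannZeta (k : ℂ)).re ^ 2 *
        ∏' p : Nat.Primes,
          (1 + ((k : ℝ) - 1) / ((p : ℕ) : ℝ) ^ k - (k : ℝ) / ((p : ℕ) : ℝ) ^ (k + 1)) := by
  have hk1 : 1 ≤ k := by omega
  have hP : ∀ p : Nat.Primes, (2:ℝ) ≤ ((p:ℕ):ℝ) := fun p => by exact_mod_cast p.2.two_le
  have hbase : Summable (fun p : Nat.Primes => 1 / ((p:ℕ):ℝ) ^ 2) :=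
    (Real.summable_one_div_nat_pow.mpr one_lt_two).comp_injective Nat.Primes.coe_nat_injective
  set h : Nat.Primes → ℝ := fun p => (1 - 1 / ((p:ℕ):ℝ) ^ k)⁻¹ with hhdef
  set G : Nat.Primes → ℝ := fun p =>
    1 + ((k : ℝ) - 1) / ((p : ℕ) : ℝ) ^ k - (k : ℝ) / ((p : ℕ) : ℝ) ^ (k + 1) with hGdef
  -- Multipliability of h
  have hmh : Multipliable h := by
    have hv : Summable (fun p : Nat.Primes => (1 - 1 / ((p:ℕ):ℝ) ^ k)⁻¹ - 1) :=
      Summable.of_nonneg_of_le (fun p => (aux_hb k hk _ (hP p)).1)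
        (fun p => (aux_hb k hk _ (hP p)).2) (hbase.mul_left 2)
    have := aux_mult_one_add (fun p => (aux_hb k hk _ (hP p)).1) hv
    exact this.congr fun p => by simp only [hhdef]; ring
  -- Multipliability of G
  have hmg : Multipliable G := by
    have hv : Summable (fun p : Nat.Primes =>
        ((k:ℝ) - 1) / ((p:ℕ):ℝ) ^ k - (k:ℝ) / ((p:ℕ):ℝ) ^ (k+1)) :=
      Summable.of_nonneg_of_le (fun p => (aux_gb k hk _ (hP p)).1)
        (fun p => (aux_gb k hk _ (hP p)).2) (hbase.mul_left (k:ℝ))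
    have := aux_mult_one_add (fun p => (aux_gb k hk _ (hP p)).1) hv
    exact this.congr fun p => by simp only [hGdef]; ring
  -- zeta value
  have hz : (riemannZeta (k : ℂ)).re = ∏' p, h p := by
    have hre : 1 < ((k:ℕ):ℂ).re := by
      simp only [Complex.natCast_re]
      exact_mod_cast (by omega : 1 < k)
    have hmap : HasProd (fun p : Nat.Primes => ((h p : ℝ) : ℂ)) (((∏' p, h p : ℝ)) : ℂ) :=
      hmh.hasProd.map Complex.ofRealHom.toMonoidHom Complex.continuous_ofReal
    have heq : ∀ p : Nat.Primes, (1 - (p : ℂ) ^ (-(k:ℂ)))⁻¹ = ((h p : ℝ) : ℂ) := by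
      intro p
      have hc : (p : ℂ) ^ (-(k:ℂ)) = ((p : ℂ) ^ k)⁻¹ := by
        rw [Complex.cpow_neg, Complex.cpow_natCast]
      rw [hc]
      simp only [hhdef]
      push_cast
      rw [one_div]
    have h1 : HasProd (fun p : Nat.Primes => (1 - (p : ℂ) ^ (-(k:ℂ)))⁻¹)
        (((∏' p, h p : ℝ)) : ℂ) := hmap.congr_fun heq
    have h2 := riemannZeta_eulerProduct_hasProd (s := (k:ℂ)) hre
    rw [h2.unique h1, Complex.ofReal_re]
  -- pointwise identity
  have key : ∀ p : Nat.Primes,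
      (1 - 1 / ((p:ℕ):ℝ)) ^ 2 *
        ∑' ν : ℕ × ℕ, (((ν.1 + ν.2) / k + 1 : ℕ) : ℝ) / ((p:ℕ):ℝ) ^ (ν.1 + ν.2)
      = h p * (h p * G p) := by
    intro p
    have hP0 : (0:ℝ) < ((p:ℕ):ℝ) := by linarith [hP p]
    have hx0 : (0:ℝ) < 1 / ((p:ℕ):ℝ) := by positivity
    have hx1 : 1 / ((p:ℕ):ℝ) < 1 := by
      rw [div_lt_one hP0]; linarith [hP p]
    have hts : ∑' ν : ℕ × ℕ, (((ν.1 + ν.2) / k + 1 : ℕ) : ℝ) / ((p:ℕ):ℝ) ^ (ν.1 + ν.2)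
        = 1/((1-1/((p:ℕ):ℝ))^2*(1-(1/((p:ℕ):ℝ))^k))
          + (k:ℝ)*(1/((p:ℕ):ℝ))^k/((1-1/((p:ℕ):ℝ))*(1-(1/((p:ℕ):ℝ))^k)^2) := by
      rw [← (aux_inner k hk1 (1/((p:ℕ):ℝ)) hx0 hx1).tsum_eq]
      refine tsum_congr fun ν => ?_
      rw [div_pow, one_pow, mul_one_div]
    rw [hts, aux_key k hk _ (hP p)]
    simp only [hhdef, hGdef]
    ring
  have hfun : (fun p : Nat.Primes =>
      (1 - 1 / ((p:ℕ):ℝ)) ^ 2 *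
        ∑' ν : ℕ × ℕ, (((ν.1 + ν.2) / k + 1 : ℕ) : ℝ) / ((p:ℕ):ℝ) ^ (ν.1 + ν.2))
      = fun p => h p * (h p * G p) := funext key
  refine ⟨?_, hmg, ?_⟩
  · rw [hfun]
    exact hmh.mul (hmh.mul hmg)
  · rw [hfun, Multipliable.tprod_mul hmh (hmh.mul hmg), Multipliable.tprod_mul hmh hmg, hz]
    ring
end
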